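/- arXiv:1909.06834 — 2 statements merged into one kernel-verified Lean document; each statement's English description precedes it below -/
import Mathlib

section
/- Fix an integer r ≥ 3, reals ε > 0 and K ≥ 1, and a function δ : ℕ → (0,∞) with δ(n) → 0. For every σ > 0 and every k > 0 there is n₀ such that for all n ≥ n₀ divisible by r, all integers m with (1+ε)(n/r)·log n < m ≤ C(n,r), every r-subset Z of [n] and every x ∈ Z: the probability that H = H^r_{n,m} satisfies R(δ(n),K), the r-graph H − Z (on vertex set [n]∖Z) satisfies F(δ(n)), and yet more than σ·n vertices y ∈ [n]∖Z fail the inequality Φ( H − ((Z∖{x}) ∪ {y}) ) ≥ (1−σ)·Φ(H−Z)·d_H(x)/D_H, is at most n^{−k}. -/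
open Finset

/-- The set of perfect matchings of the `r`-graph `G` on vertex set `W`. -/
def pmSet (W : Finset ℕ) (G : Finset (Finset ℕ)) : Finset (Finset (Finset ℕ)) :=
  G.powerset.filter (fun M => (∀ A ∈ M, ∀ B ∈ M, A ≠ B → A ∩ B = ∅) ∧ M.biUnion id = W)

/-- The number of perfect matchings of `G` (denoted `Φ(G)`). -/
def pmCount (W : Finset ℕ) (G : Finset (Finset ℕ)) : ℕ := (pmSet W G).card

/-- All `r`-element subsets of `[n]`. -/
def Kn (n r : ℕ) : Finset (Finset ℕ) := Finset.powersetCard r (Finset.range n)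

/-- `G − Z`: the set of edges of `G` disjoint from `Z`. -/
def minus (G : Finset (Finset ℕ)) (Z : Finset ℕ) : Finset (Finset ℕ) :=
  G.filter (fun A => A ∩ Z = ∅)

/-- `Φ(G − Z)`, with `G − Z` regarded as an `r`-graph on `W \ Z`. -/
def phiSub (W : Finset ℕ) (G : Finset (Finset ℕ)) (Z : Finset ℕ) : ℕ :=
  pmCount (W \ Z) (minus G Z)

/-- Degree of `x` in `G`. -/
def deg (G : Finset (Finset ℕ)) (x : ℕ) : ℕ := (G.filter (fun A => x ∈ A)).card

/-- Codegree of `x, y` in `G`. -/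
def codeg (G : Finset (Finset ℕ)) (x y : ℕ) : ℕ :=
  (G.filter (fun A => x ∈ A ∧ y ∈ A)).card

/-- Average degree `D_G = r|G|/|W|`. -/
noncomputable def avgDeg (r : ℕ) (W : Finset ℕ) (G : Finset (Finset ℕ)) : ℝ :=
  ((r : ℝ) * G.card) / W.card

/-- Property `R(δ,K)`: all but at most `δ|W|` vertices have degree `(1±δ)D_G`,
every degree lies in `[D_G/K, K·D_G]`, and all codegrees are at most `δ·D_G`. -/
def propR (r : ℕ) (W : Finset ℕ) (G : Finset (Finset ℕ)) (δ K : ℝ) : Prop :=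
  ((W.filter (fun x =>
      ¬((1 - δ) * avgDeg r W G ≤ (deg G x : ℝ) ∧
        (deg G x : ℝ) ≤ (1 + δ) * avgDeg r W G))).card : ℝ) ≤ δ * W.card ∧
  (∀ x ∈ W, (deg G x : ℝ) ≤ K * avgDeg r W G ∧ avgDeg r W G / K ≤ (deg G x : ℝ)) ∧
  ∀ x ∈ W, ∀ y ∈ W, x ≠ y → (codeg G x y : ℝ) ≤ δ * avgDeg r W G

/-- Property `E(σ)`: all but at most `σ|G|` edges `A` satisfy
`Φ(G−A) = (1±σ)Φ(G)/D_G`. -/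
def propE (r : ℕ) (W : Finset ℕ) (G : Finset (Finset ℕ)) (σ : ℝ) : Prop :=
  ((G.filter (fun A =>
      ¬((1 - σ) * (pmCount W G : ℝ) / avgDeg r W G ≤ (phiSub W G A : ℝ) ∧
        (phiSub W G A : ℝ) ≤ (1 + σ) * (pmCount W G : ℝ) / avgDeg r W G))).card : ℝ) ≤
    σ * G.card

/-- Property `F(σ)`: all but at most `σ·C(|W|,r)` of the `r`-subsets `U` of `W`
satisfy `Φ(G−U) = (1±σ)Φ(G)/D_G`. -/
def propF (r : ℕ) (W : Finset ℕ) (G : Finset (Finset ℕ)) (σ : ℝ) : Prop :=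
  (((Finset.powersetCard r W).filter (fun U =>
      ¬((1 - σ) * (pmCount W G : ℝ) / avgDeg r W G ≤ (phiSub W G U : ℝ) ∧
        (phiSub W G U : ℝ) ≤ (1 + σ) * (pmCount W G : ℝ) / avgDeg r W G))).card : ℝ) ≤
    σ * (W.card.choose r)

/-- Property `C(δ,σ)`: for every `r`-subset `Z` of `W` with
`Φ(G−Z) ≥ Φ(G)e^{−δ|W|}` and every `x ∈ Z`, all but at most `σ|W|` vertices
`y ∈ W∖Z` satisfy `Φ(G−((Z∖{x})∪{y})) ≥ (1−σ)·Φ(G−Z)·d_G(x)/D_G`. -/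
def propC (r : ℕ) (W : Finset ℕ) (G : Finset (Finset ℕ)) (δ σ : ℝ) : Prop :=
  ∀ Z ∈ Finset.powersetCard r W,
    (pmCount W G : ℝ) * Real.exp (-δ * W.card) ≤ (phiSub W G Z : ℝ) →
    ∀ x ∈ Z,
      (((W \ Z).filter (fun y =>
          ¬((1 - σ) * (phiSub W G Z : ℝ) * (deg G x : ℝ) / avgDeg r W G ≤
            (phiSub W G (insert y (Z.erase x)) : ℝ)))).card : ℝ) ≤ σ * W.card

/-- Property `B(C)`: `Φ(G−A) ≤ C·Φ(G)/D_G` for every edge `A ∈ G`. -/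
def propB (r : ℕ) (W : Finset ℕ) (G : Finset (Finset ℕ)) (C : ℝ) : Prop :=
  ∀ A ∈ G, (phiSub W G A : ℝ) ≤ C * (pmCount W G : ℝ) / avgDeg r W G

/-- Property `A(δ)` for an `r`-graph `H` on `[n]` with `m` edges:
`log Φ(H) > log Φ₀ − ∑_{i=1}^{t} γ_i − δn`, where `t = C(n,r) − m`,
`γ_i = (n/r)/(C(n,r)−i+1)`, and `Φ₀ = n!/((n/r)!·(r!)^{n/r})`. -/
def propA (r n : ℕ) (H : Finset (Finset ℕ)) (δ : ℝ) : Prop :=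
  Real.log ((n.factorial : ℝ) /
      ((Nat.factorial (n / r) : ℝ) * (Nat.factorial r : ℝ) ^ (n / r)))
    - (∑ i ∈ Finset.Icc 1 (n.choose r - H.card),
        ((n : ℝ) / r) / ((n.choose r : ℝ) - (i : ℝ) + 1))
    - δ * n < Real.log (pmCount (Finset.range n) H)


namespace LemmaCAux
open scoped Classical


/-- Sum over injective q-tuples from T of products of weights. -/
def Fq (w : Finset ℕ → ℕ) : ℕ → Finset (Finset ℕ) → ℕ
  | 0, _ => 1
  | q+1, T => ∑ A ∈ T, w A * Fq w q (T.erase A)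

lemma prodsub_mono (n : ℕ) (q : ℕ) {a b : ℕ} (hab : a ≤ b) :
    ∏ i ∈ range q, (a - i * n) ≤ ∏ i ∈ range q, (b - i * n) := by
  apply Finset.prod_le_prod' -- maybe wrong name
  intro i _
  omega

lemma Fq_lower (w : Finset ℕ → ℕ) (n : ℕ) (hw : ∀ A, w A ≤ n) :
    ∀ q T, (∏ i ∈ range q, ((∑ A ∈ T, w A) - i * n)) ≤ Fq w q T := by
  intro q
  induction q with
  | zero => intro T; simp [Fq]
  | succ q ih =>
    intro T
    set X := ∑ A ∈ T, w A with hX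
    rcases Nat.eq_zero_or_pos X with h0 | hpos
    · -- X = 0: product has factor X - 0 = 0
      rw [Finset.prod_range_succ']
      simp [h0]
    have key : ∀ A ∈ T, ∏ i ∈ range q, (X - (i+1) * n) ≤ Fq w q (T.erase A) := by
      intro A hA
      calc ∏ i ∈ range q, (X - (i+1) * n)
          ≤ ∏ i ∈ range q, ((∑ B ∈ T.erase A, w B) - i * n) := by
            apply Finset.prod_le_prod'
            intro i _
            have h1 : ∑ B ∈ T.erase A, w B = X - w A := by
              rw [hX, ← Finset.sum_erase_add T w hA]; omega
            have h2 := hw A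
            have h3 : (i+1) * n = i * n + n := by ring
            rw [h1]
            omega
        _ ≤ Fq w q (T.erase A) := ih _
    calc ∏ i ∈ range (q+1), (X - i * n)
        = (∏ i ∈ range q, (X - (i+1) * n)) * (X - 0 * n) := by
          rw [Finset.prod_range_succ']
      _ = X * ∏ i ∈ range q, (X - (i+1) * n) := by
          simp [Nat.mul_comm]
      _ = ∑ A ∈ T, w A * ∏ i ∈ range q, (X - (i+1) * n) := by
          rw [← Finset.sum_mul]
      _ ≤ ∑ A ∈ T, w A * Fq w q (T.erase A) := by
          apply Finset.sum_le_sum; intro A hA; exact Nat.mul_le_mul_left _ (key A hA)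
      _ = Fq w (q+1) T := rfl

lemma Fq_upper (w : Finset ℕ → ℕ) :
    ∀ (q : ℕ) (E : Finset (Finset ℕ)) (s : ℕ),
      ∑ T ∈ Finset.powersetCard s E, Fq w q T ≤
        (∑ A ∈ E, w A) ^ q * (E.card - q).choose (s - q) := by
  intro q
  induction q with
  | zero => intro E s; simp [Fq, Finset.card_powersetCard]
  | succ q ih =>
    intro E s
    have step1 : ∑ T ∈ Finset.powersetCard s E, Fq w (q+1) T
        = ∑ A ∈ E, ∑ T ∈ (Finset.powersetCard s E).filter (fun T => A ∈ T),
            w A * Fq w q (T.erase A) := by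
      show ∑ T ∈ Finset.powersetCard s E, ∑ A ∈ T, w A * Fq w q (T.erase A) = _
      rw [Finset.sum_comm']
      intro T A
      simp only [Finset.mem_filter, Finset.mem_powersetCard]
      constructor
      · rintro ⟨⟨hTE, hTc⟩, hAT⟩; exact ⟨⟨⟨hTE, hTc⟩, hAT⟩, hTE hAT⟩
      · rintro ⟨⟨h1, hAT⟩, _⟩; exact ⟨h1, hAT⟩
    rw [step1]
    have step2 : ∀ A ∈ E,
        ∑ T ∈ (Finset.powersetCard s E).filter (fun T => A ∈ T),
            w A * Fq w q (T.erase A)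
        ≤ w A * ((∑ B ∈ E.erase A, w B) ^ q * ((E.erase A).card - q).choose ((s-1) - q)) := by
      intro A hA
      rw [← Finset.mul_sum]
      apply Nat.mul_le_mul_left
      calc ∑ T ∈ (Finset.powersetCard s E).filter (fun T => A ∈ T), Fq w q (T.erase A)
          = ∑ T' ∈ ((Finset.powersetCard s E).filter (fun T => A ∈ T)).image (fun T => T.erase A),
              Fq w q T' := by
            rw [Finset.sum_image]
            intro T1 h1 T2 h2 he
            simp only [Finset.mem_coe, Finset.mem_filter] at h1 h2
            rw [← Finset.insert_erase h1.2, ← Finset.insert_erase h2.2, show T1.erase A = T2.erase A from he]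
        _ ≤ ∑ T' ∈ Finset.powersetCard (s-1) (E.erase A), Fq w q T' := by
            apply Finset.sum_le_sum_of_subset
            intro T' hT'
            simp only [Finset.mem_image, Finset.mem_filter, Finset.mem_powersetCard] at *
            obtain ⟨T, ⟨⟨hTE, hTc⟩, hAT⟩, rfl⟩ := hT'
            constructor
            · intro b hb
              rw [Finset.mem_erase] at hb ⊢
              exact ⟨hb.1, hTE hb.2⟩
            · rw [Finset.card_erase_of_mem hAT, hTc]
        _ ≤ _ := ih _ _
    calc ∑ A ∈ E, ∑ T ∈ (Finset.powersetCard s E).filter (fun T => A ∈ T),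
            w A * Fq w q (T.erase A)
        ≤ ∑ A ∈ E, w A * ((∑ B ∈ E.erase A, w B) ^ q * ((E.erase A).card - q).choose ((s-1) - q)) :=
          Finset.sum_le_sum step2
      _ ≤ ∑ A ∈ E, w A * ((∑ B ∈ E, w B) ^ q * (E.card - (q+1)).choose (s - (q+1))) := by
          apply Finset.sum_le_sum
          intro A hA
          apply Nat.mul_le_mul_left
          apply Nat.mul_le_mul
          · exact Nat.pow_le_pow_left (Finset.sum_le_sum_of_subset (Finset.erase_subset _ _)) _
          · apply Nat.le_of_eq
            congr 1
            · rw [Finset.card_erase_of_mem hA]; omega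
            · omega
      _ = (∑ A ∈ E, w A) ^ (q+1) * (E.card - (q+1)).choose (s - (q+1)) := by
          rw [← Finset.sum_mul, pow_succ]
          ring

lemma choose_ratio : ∀ (q N s : ℕ), q ≤ s → s ≤ N →
    (N - q).choose (s - q) * ∏ i ∈ range q, (N - i) =
      N.choose s * ∏ i ∈ range q, (s - i) := by
  intro q
  induction q with
  | zero => simp
  | succ q ih =>
    intro N s hq hs
    have hq' : q ≤ s := le_of_lt hq
    have key : (N - (q+1)).choose (s - (q+1)) * (N - q) = (N - q).choose (s - q) * (s - q) := by
      have h1 : N - q = (N - (q+1)) + 1 := by omega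
      have h2 : s - q = (s - (q+1)) + 1 := by omega
      rw [h1, h2]
      rw [mul_comm]
      simpa [Nat.succ_eq_add_one] using Nat.add_one_mul_choose_eq (N - (q+1)) (s - (q+1))
    rw [Finset.prod_range_succ, Finset.prod_range_succ,
        show (N - (q+1)).choose (s - (q+1)) * ((∏ i ∈ range q, (N - i)) * (N - q))
          = ((N - (q+1)).choose (s - (q+1)) * (N - q)) * ∏ i ∈ range q, (N - i) by ring,
        key, show (N - q).choose (s - q) * (s - q) * ∏ i ∈ range q, (N - i)
          = ((N - q).choose (s - q) * ∏ i ∈ range q, (N - i)) * (s - q) by ring,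
        ih N s hq' hs]
    ring

lemma inter_empty_iff (A B : Finset ℕ) : A ∩ B = ∅ ↔ ∀ a ∈ A, a ∉ B := by
  simp [Finset.eq_empty_iff_forall_notMem, Finset.mem_inter]

lemma pm_inj (n r : ℕ) (H : Finset (Finset ℕ)) (hH : H ⊆ Kn n r) (Z : Finset ℕ)
    (hZ : Z ⊆ Finset.range n) (x : ℕ) (hx : x ∈ Z) (y : ℕ) (hy : y ∈ Finset.range n \ Z)
    (𝒜 : Finset (Finset ℕ))
    (h𝒜 : ∀ A ∈ 𝒜, A ∈ H ∧ x ∈ A ∧ A ∩ Z.erase x = ∅ ∧ y ∉ A) :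
    ∑ A ∈ 𝒜, phiSub (Finset.range n \ Z) (minus H Z) (insert y (A.erase x))
      ≤ phiSub (Finset.range n) H (insert y (Z.erase x)) := by
  classical
  simp only [phiSub, pmCount]
  rw [← Finset.card_sigma]
  apply Finset.card_le_card_of_injOn (fun p => insert p.1 p.2)
  · -- maps into target pmSet
    rintro ⟨A, M⟩ hp
    rw [Finset.mem_coe, Finset.mem_sigma] at hp
    obtain ⟨hA𝒜, hM⟩ := hp
    obtain ⟨hAH, hxA, hAZ', hyA⟩ := h𝒜 A hA𝒜
    have hAKn := hH hAH
    rw [Kn, Finset.mem_powersetCard] at hAKn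
    obtain ⟨hAV, hAcard⟩ := hAKn
    simp only [pmSet, Finset.mem_coe, Finset.mem_filter, Finset.mem_powerset] at hM ⊢
    obtain ⟨hMsub, hMdisj, hMbi⟩ := hM
    have hMfacts : ∀ e ∈ M, e ∈ H ∧ e ∩ Z = ∅ ∧ e ∩ insert y (A.erase x) = ∅ := by
      intro e he
      have := hMsub he
      simp only [minus, Finset.mem_filter] at this
      exact ⟨this.1.1, this.1.2, this.2⟩
    have hxy : x ≠ y := by
      rw [Finset.mem_sdiff] at hy; intro h; exact hy.2 (h ▸ hx)
    have hAnotM : A ∉ M := by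
      intro h
      have := (hMfacts A h).2.1
      rw [inter_empty_iff] at this
      exact this x hxA hx
    refine ⟨?_, ?_, ?_⟩
    · -- subset of minus H (insert y (Z.erase x))
      intro e he
      rw [Finset.mem_insert] at he
      simp only [minus, Finset.mem_filter]
      rcases he with rfl | he
      · refine ⟨hAH, ?_⟩
        rw [inter_empty_iff] at hAZ' ⊢
        intro a ha hmem
        rw [Finset.mem_insert] at hmem
        rcases hmem with rfl | hmem
        · exact hyA ha
        · exact hAZ' a ha hmem
      · obtain ⟨heH, heZ, heU⟩ := hMfacts e he
        refine ⟨heH, ?_⟩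
        rw [inter_empty_iff] at heZ heU ⊢
        intro a ha hmem
        rw [Finset.mem_insert] at hmem
        rcases hmem with rfl | hmem
        · exact heU a ha (Finset.mem_insert_self _ _)
        · exact heZ a ha (Finset.mem_of_mem_erase hmem)
    · -- pairwise disjoint
      intro e he f hf hef
      rw [Finset.mem_insert] at he hf
      have key : ∀ g ∈ M, A ∩ g = ∅ := by
        intro g hg
        obtain ⟨_, hgZ, hgU⟩ := hMfacts g hg
        rw [inter_empty_iff] at hgZ hgU ⊢
        intro a ha hag
        rcases eq_or_ne a x with rfl | hax
        · exact hgZ a hag hx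
        · exact hgU a hag (Finset.mem_insert_of_mem (Finset.mem_erase.2 ⟨hax, ha⟩))
      rcases he with rfl | he
      · rcases hf with rfl | hf
        · exact absurd rfl hef
        · exact key f hf
      · rcases hf with rfl | hf
        · rw [Finset.inter_comm]; exact key e he
        · exact hMdisj e he f hf hef
    · -- biUnion
      rw [Finset.biUnion_insert, hMbi]
      ext a
      simp only [Finset.mem_union, Finset.mem_sdiff, Finset.mem_insert, Finset.mem_range,
        Finset.mem_erase, id]
      constructor
      · rintro (ha | ⟨⟨haV, haZ⟩, haU⟩)
        · have haV : a ∈ Finset.range n := hAV ha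
          rw [Finset.mem_range] at haV
          refine ⟨haV, ?_⟩
          push_neg
          rw [inter_empty_iff] at hAZ'
          constructor
          · intro h; exact hyA (h ▸ ha)
          · intro hax haZ; exact hAZ' a ha (Finset.mem_erase.2 ⟨hax, haZ⟩)
        · refine ⟨haV, ?_⟩
          push_neg
          constructor
          · intro h; exact haU (Or.inl h)
          · intro _; exact haZ
      · rintro ⟨haV, ha⟩
        push_neg at ha
        obtain ⟨hay, haZ'⟩ := ha
        by_cases haA : a ∈ A
        · exact Or.inl haA
        · right
          have haZ : a ∉ Z := by
            intro h
            rcases eq_or_ne a x with rfl | hax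
            · exact haA hxA
            · exact haZ' hax h
          refine ⟨⟨haV, haZ⟩, ?_⟩
          intro h
          rcases h with rfl | h
          · exact hay rfl
          · exact haA h.2
  · -- injective
    rintro ⟨A, M⟩ hp ⟨A', M'⟩ hp' heq
    rw [Finset.mem_coe, Finset.mem_sigma] at hp hp'
    obtain ⟨hA𝒜, hM⟩ := hp
    obtain ⟨hA'𝒜, hM'⟩ := hp'
    obtain ⟨hAH, hxA, _, _⟩ := h𝒜 A hA𝒜
    obtain ⟨hA'H, hxA', _, _⟩ := h𝒜 A' hA'𝒜
    simp only [pmSet, Finset.mem_filter, Finset.mem_powerset] at hM hM'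
    have hMZ : ∀ e ∈ M, e ∩ Z = ∅ := by
      intro e he
      have := hM.1 he
      simp only [minus, Finset.mem_filter] at this
      exact this.1.2
    have hM'Z : ∀ e ∈ M', e ∩ Z = ∅ := by
      intro e he
      have := hM'.1 he
      simp only [minus, Finset.mem_filter] at this
      exact this.1.2
    have hAnotM : A ∉ M := fun h => by
      have := hMZ A h; rw [inter_empty_iff] at this; exact this x hxA hx
    have hA'notM' : A' ∉ M' := fun h => by
      have := hM'Z A' h; rw [inter_empty_iff] at this; exact this x hxA' hx
    simp only at heq
    have hAA' : A = A' := by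
      have hA'mem : A' ∈ insert A M := by rw [heq]; exact Finset.mem_insert_self _ _
      rw [Finset.mem_insert] at hA'mem
      rcases hA'mem with h | h
      · exact h.symm
      · exact absurd hx (by have := hMZ A' h; rw [inter_empty_iff] at this; exact this x hxA')
    subst hAA'
    have : M = M' := by
      have := congrArg (fun S => Finset.erase S A) heq
      simpa [Finset.erase_insert hAnotM, Finset.erase_insert hA'notM'] using this
    rw [this]

/-- weight of an edge: number of y making a bad r-set -/
noncomputable def wt (B : Finset (Finset ℕ)) (n : ℕ) (Z : Finset ℕ) (x : ℕ) (A : Finset ℕ) : ℕ :=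
  if x ∈ A ∧ A ∩ Z.erase x = ∅ then
    ((Finset.range n \ Z).filter (fun y => y ∉ A ∧ insert y (A.erase x) ∈ B)).card
  else 0

lemma wt_le (B : Finset (Finset ℕ)) (n : ℕ) (Z : Finset ℕ) (x : ℕ) (A : Finset ℕ) :
    wt B n Z x A ≤ n := by
  rw [wt]
  split
  · calc ((Finset.range n \ Z).filter _).card ≤ (Finset.range n \ Z).card :=
          Finset.card_filter_le _ _
      _ ≤ (Finset.range n).card := Finset.card_le_card (Finset.sdiff_subset)
      _ = n := Finset.card_range n
  · exact Nat.zero_le n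

lemma fubini_wt (B : Finset (Finset ℕ)) (n : ℕ) (Z : Finset ℕ) (x : ℕ)
    (H : Finset (Finset ℕ)) :
    ∑ y ∈ Finset.range n \ Z,
      (H.filter (fun A => x ∈ A ∧ A ∩ Z.erase x = ∅ ∧ y ∉ A ∧ insert y (A.erase x) ∈ B)).card
      = ∑ A ∈ H, wt B n Z x A := by
  have lhs : ∀ y, (H.filter (fun A => x ∈ A ∧ A ∩ Z.erase x = ∅ ∧ y ∉ A ∧ insert y (A.erase x) ∈ B)).card
      = ∑ A ∈ H, if x ∈ A ∧ A ∩ Z.erase x = ∅ ∧ y ∉ A ∧ insert y (A.erase x) ∈ B then 1 else 0 := by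
    intro y; rw [Finset.card_filter]
  simp only [lhs]
  rw [Finset.sum_comm]
  apply Finset.sum_congr rfl
  intro A _
  by_cases hp : x ∈ A ∧ A ∩ Z.erase x = ∅
  · rw [wt, if_pos hp, Finset.card_filter]
    apply Finset.sum_congr rfl
    intro y _
    simp [hp.1, hp.2]
  · rw [wt, if_neg hp]
    apply Finset.sum_eq_zero
    intro y _
    rw [if_neg]
    tauto

lemma sum_wt_le (B : Finset (Finset ℕ)) (n : ℕ) (Z : Finset ℕ) (x : ℕ)
    (E : Finset (Finset ℕ)) :
    ∑ A ∈ E, wt B n Z x A ≤ ∑ U ∈ B, U.card := by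
  have hwt : ∀ A, wt B n Z x A =
      (if x ∈ A ∧ A ∩ Z.erase x = ∅ then
        ((Finset.range n \ Z).filter (fun y => y ∉ A ∧ insert y (A.erase x) ∈ B))
      else ∅).card := by
    intro A
    rw [wt]
    split <;> simp
  simp only [hwt]
  rw [← Finset.card_sigma, ← Finset.card_sigma]
  apply Finset.card_le_card_of_injOn
    (fun p => (⟨insert p.2 (p.1.erase x), p.2⟩ : Σ _ : Finset ℕ, ℕ))
  · rintro ⟨A, y⟩ hp
    rw [Finset.mem_coe, Finset.mem_sigma] at hp
    obtain ⟨_, hy⟩ := hp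
    by_cases hc : x ∈ A ∧ A ∩ Z.erase x = ∅
    · rw [if_pos hc, Finset.mem_filter] at hy
      rw [Finset.mem_coe, Finset.mem_sigma]
      exact ⟨hy.2.2, Finset.mem_insert_self _ _⟩
    · rw [if_neg hc] at hy; exact absurd hy (Finset.notMem_empty _)
  · rintro ⟨A, y⟩ hp ⟨A', y'⟩ hp' heq
    rw [Finset.mem_coe, Finset.mem_sigma] at hp hp'
    obtain ⟨_, hy⟩ := hp
    obtain ⟨_, hy'⟩ := hp'
    by_cases hc : x ∈ A ∧ A ∩ Z.erase x = ∅
    swap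
    · rw [if_neg hc] at hy; exact absurd hy (Finset.notMem_empty _)
    by_cases hc' : x ∈ A' ∧ A' ∩ Z.erase x = ∅
    swap
    · rw [if_neg hc'] at hy'; exact absurd hy' (Finset.notMem_empty _)
    rw [if_pos hc, Finset.mem_filter] at hy
    rw [if_pos hc', Finset.mem_filter] at hy'
    have hU : insert y (A.erase x) = insert y' (A'.erase x) :=
      congrArg (fun p : Σ _ : Finset ℕ, ℕ => p.1) heq
    have hyy' : y = y' := congrArg (fun p : Σ _ : Finset ℕ, ℕ => p.2) heq
    subst hyy'
    have hA : A.erase x = A'.erase x := by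
      have h1 : (insert y (A.erase x)).erase y = A.erase x :=
        Finset.erase_insert (by simp [hy.2.1])
      have h2 : (insert y (A'.erase x)).erase y = A'.erase x :=
        Finset.erase_insert (by simp [hy'.2.1])
      rw [← h1, ← h2, hU]
    have : A = A' := by
      rw [← Finset.insert_erase hc.1, ← Finset.insert_erase hc'.1, hA]
    simp [this]

lemma card_meet_le (H : Finset (Finset ℕ)) (Z : Finset ℕ) :
    (H.filter (fun A => ¬ A ∩ Z = ∅)).card ≤ ∑ z ∈ Z, deg H z := by
  calc (H.filter (fun A => ¬ A ∩ Z = ∅)).card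
      ≤ (Z.biUnion (fun z => H.filter (fun A => z ∈ A))).card := by
        apply Finset.card_le_card
        intro A hA
        rw [Finset.mem_filter] at hA
        obtain ⟨hAH, hAZ⟩ := hA
        obtain ⟨z, hz⟩ := Finset.nonempty_iff_ne_empty.2 hAZ
        rw [Finset.mem_inter] at hz
        rw [Finset.mem_biUnion]
        exact ⟨z, hz.2, Finset.mem_filter.2 ⟨hAH, hz.1⟩⟩
    _ ≤ ∑ z ∈ Z, deg H z := Finset.card_biUnion_le

lemma deg_split (H : Finset (Finset ℕ)) (B : Finset (Finset ℕ)) (Z : Finset ℕ) (x y : ℕ) :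
    deg H x ≤ (H.filter (fun A => x ∈ A ∧ A ∩ Z.erase x = ∅ ∧ y ∉ A ∧ insert y (A.erase x) ∉ B)).card
      + (∑ z ∈ Z.erase x, codeg H x z) + codeg H x y
      + (H.filter (fun A => x ∈ A ∧ A ∩ Z.erase x = ∅ ∧ y ∉ A ∧ insert y (A.erase x) ∈ B)).card := by
  have hsub : H.filter (fun A => x ∈ A) ⊆
      (H.filter (fun A => x ∈ A ∧ A ∩ Z.erase x = ∅ ∧ y ∉ A ∧ insert y (A.erase x) ∉ B))
      ∪ ((Z.erase x).biUnion (fun z => H.filter (fun A => x ∈ A ∧ z ∈ A)))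
      ∪ (H.filter (fun A => x ∈ A ∧ y ∈ A))
      ∪ (H.filter (fun A => x ∈ A ∧ A ∩ Z.erase x = ∅ ∧ y ∉ A ∧ insert y (A.erase x) ∈ B)) := by
    intro A hA
    rw [Finset.mem_filter] at hA
    obtain ⟨hAH, hxA⟩ := hA
    simp only [Finset.mem_union, Finset.mem_filter, Finset.mem_biUnion]
    by_cases h1 : A ∩ Z.erase x = ∅
    · by_cases h2 : y ∈ A
      · exact Or.inl (Or.inr ⟨hAH, hxA, h2⟩)
      · by_cases h3 : insert y (A.erase x) ∈ B
        · exact Or.inr ⟨hAH, hxA, h1, h2, h3⟩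
        · exact Or.inl (Or.inl (Or.inl ⟨hAH, hxA, h1, h2, h3⟩))
    · obtain ⟨z, hz⟩ := Finset.nonempty_iff_ne_empty.2 h1
      rw [Finset.mem_inter] at hz
      exact Or.inl (Or.inl (Or.inr ⟨z, hz.2, hAH, hxA, hz.1⟩))
  refine le_trans (Finset.card_le_card hsub) ?_
  refine le_trans (Finset.card_union_le _ _) (add_le_add ?_ le_rfl)
  refine le_trans (Finset.card_union_le _ _) (add_le_add ?_ le_rfl)
  refine le_trans (Finset.card_union_le _ _) (add_le_add le_rfl ?_)
  exact Finset.card_biUnion_le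

lemma sum_choose_le (E0 E1 : Finset (Finset ℕ)) (hdisj : ∀ A ∈ E0, A ∉ E1) (m : ℕ) :
    ∑ G ∈ E0.powerset.filter (fun G => G.card ≤ m), (E1.card.choose (m - G.card))
      ≤ ((E0 ∪ E1).card).choose m := by
  have : ∀ G : Finset (Finset ℕ), E1.card.choose (m - G.card) = (Finset.powersetCard (m - G.card) E1).card := by
    intro G; rw [Finset.card_powersetCard]
  simp only [this]
  rw [← Finset.card_sigma, ← Finset.card_powersetCard]
  apply Finset.card_le_card_of_injOn (fun p => p.1 ∪ p.2)
  · rintro ⟨G, T⟩ hp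
    rw [Finset.mem_coe, Finset.mem_sigma, Finset.mem_filter, Finset.mem_powerset] at hp; rw [Finset.mem_coe]
    obtain ⟨⟨hGE, hGm⟩, hT⟩ := hp
    rw [Finset.mem_powersetCard] at hT ⊢
    obtain ⟨hTE, hTc⟩ := hT
    constructor
    · exact Finset.union_subset (hGE.trans Finset.subset_union_left)
        (hTE.trans Finset.subset_union_right)
    · rw [Finset.card_union_of_disjoint, hTc]
      · omega
      · rw [Finset.disjoint_left]
        intro A hAG hAT
        exact hdisj A (hGE hAG) (hTE hAT)
  · rintro ⟨G, T⟩ hp ⟨G', T'⟩ hp' heq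
    simp only [Finset.mem_coe, Finset.mem_sigma, Finset.mem_filter, Finset.mem_powerset,
      Finset.mem_powersetCard] at hp hp'
    obtain ⟨⟨hGE, _⟩, hTE, _⟩ := hp
    obtain ⟨⟨hGE', _⟩, hTE', _⟩ := hp'
    simp only at heq
    have key : ∀ (G T : Finset (Finset ℕ)), G ⊆ E0 → T ⊆ E1 → (G ∪ T) ∩ E0 = G := by
      intro G T hG hT
      ext A
      simp only [Finset.mem_inter, Finset.mem_union]
      constructor
      · rintro ⟨h | h, hE0⟩
        · exact h
        · exact absurd hE0 (fun hE0 => hdisj A hE0 (hT h))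
      · intro h; exact ⟨Or.inl h, hG h⟩
    have hGG : G = G' := by
      rw [← key G T hGE hTE, ← key G' T' hGE' hTE', heq]
    subst hGG
    have key2 : ∀ (T T' : Finset (Finset ℕ)), T ⊆ E1 → G ∪ T = G ∪ T' → T ⊆ T' ∪ G := by
      intro T T' hT he
      intro A hA
      have : A ∈ G ∪ T' := by rw [← he]; exact Finset.mem_union_right _ hA
      rw [Finset.mem_union] at this
      rw [Finset.mem_union]
      tauto
    have hTT : T = T' := by
      apply Finset.Subset.antisymm
      · intro A hA
        have := key2 T T' hTE heq hA
        rw [Finset.mem_union] at this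
        rcases this with h | h
        · exact h
        · exact absurd (hTE hA) (hdisj A (hGE h))
      · intro A hA
        have := key2 T' T hTE' heq.symm hA
        rw [Finset.mem_union] at this
        rcases this with h | h
        · exact h
        · exact absurd (hTE' hA) (hdisj A (hGE h))
    subst hTT
    rfl

lemma badT_count (w : Finset ℕ → ℕ) (n : ℕ) (hw : ∀ A, w A ≤ n)
    (E1 : Finset (Finset ℕ)) (s q : ℕ) (tR : ℝ) (htpos : 0 < tR)
    (hqn : (q : ℝ) * n ≤ 3/4 * tR) :
    (((Finset.powersetCard s E1).filter (fun T => tR < (∑ A ∈ T, w A : ℕ))).card : ℝ)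
      * (tR/4)^q ≤ ((∑ A ∈ E1, w A) ^ q * ((E1.card - q).choose (s - q)) : ℕ) := by
  set bad := (Finset.powersetCard s E1).filter (fun T => tR < (∑ A ∈ T, w A : ℕ)) with hbad
  have key : ∀ T ∈ bad, (tR/4)^q ≤ (Fq w q T : ℝ) := by
    intro T hT
    rw [hbad, Finset.mem_filter] at hT
    obtain ⟨_, hX⟩ := hT
    set X := ∑ A ∈ T, w A with hXdef
    calc (tR/4)^q = ∏ _i ∈ range q, (tR/4) := by
          rw [Finset.prod_const, Finset.card_range]
      _ ≤ ∏ i ∈ range q, ((X - i * n : ℕ) : ℝ) := by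
          apply Finset.prod_le_prod
          · intro i _; positivity
          · intro i hi
            rw [Finset.mem_range] at hi
            have hin : (i : ℝ) * n ≤ 3/4 * tR := by
              calc (i:ℝ) * n ≤ (q:ℝ) * n := by
                    apply mul_le_mul_of_nonneg_right _ (Nat.cast_nonneg n)
                    exact_mod_cast le_of_lt hi
                _ ≤ 3/4 * tR := hqn
            have hle : i * n ≤ X := by
              by_contra hcon
              push_neg at hcon
              have : (X : ℝ) ≤ (i * n : ℕ) := by exact_mod_cast le_of_lt hcon
              push_cast at this
              nlinarith
            rw [Nat.cast_sub hle]
            push_cast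
            nlinarith
      _ = ((∏ i ∈ range q, (X - i * n) : ℕ) : ℝ) := by rw [Nat.cast_prod]
      _ ≤ (Fq w q T : ℝ) := by exact_mod_cast Fq_lower w n hw q T
  calc (bad.card : ℝ) * (tR/4)^q = ∑ _T ∈ bad, (tR/4)^q := by
        rw [Finset.sum_const, nsmul_eq_mul, mul_comm]
    _ ≤ ∑ T ∈ bad, (Fq w q T : ℝ) := Finset.sum_le_sum key
    _ ≤ ∑ T ∈ Finset.powersetCard s E1, (Fq w q T : ℝ) := by
        apply Finset.sum_le_sum_of_subset_of_nonneg (Finset.filter_subset _ _)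
        intro i _ _; positivity
    _ = ((∑ T ∈ Finset.powersetCard s E1, Fq w q T : ℕ) : ℝ) := by rw [Nat.cast_sum]
    _ ≤ _ := by exact_mod_cast Fq_upper w q E1 s

lemma choose_ratio_le (q N s : ℕ) (hq : q ≤ s) (hs : s ≤ N) (hqN : q < N) :
    ((N - q).choose (s - q) : ℝ) * ((N : ℝ) - q)^q ≤ (N.choose s : ℝ) * (s : ℝ)^q := by
  have hid := choose_ratio q N s hq hs
  have h1 : ((N : ℝ) - q)^q ≤ ((∏ i ∈ range q, (N - i) : ℕ) : ℝ) := by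
    rw [Nat.cast_prod]
    calc ((N : ℝ) - q)^q = ∏ _i ∈ range q, ((N:ℝ) - q) := by
          rw [Finset.prod_const, Finset.card_range]
      _ ≤ ∏ i ∈ range q, ((N - i : ℕ) : ℝ) := by
          apply Finset.prod_le_prod
          · intro i _
            have : (q:ℝ) ≤ N := by exact_mod_cast le_of_lt hqN
            linarith
          · intro i hi
            rw [Finset.mem_range] at hi
            have hiN : i ≤ N := by omega
            rw [Nat.cast_sub hiN]
            have : (i : ℝ) ≤ q := by exact_mod_cast le_of_lt hi
            linarith
  have h2 : ((∏ i ∈ range q, (s - i) : ℕ) : ℝ) ≤ (s:ℝ)^q := by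
    rw [Nat.cast_prod]
    calc ∏ i ∈ range q, ((s - i : ℕ) : ℝ) ≤ ∏ _i ∈ range q, (s:ℝ) := by
          apply Finset.prod_le_prod
          · intro i _; positivity
          · intro i _; exact_mod_cast Nat.sub_le s i
      _ = (s:ℝ)^q := by rw [Finset.prod_const, Finset.card_range]
  calc ((N - q).choose (s - q) : ℝ) * ((N : ℝ) - q)^q
      ≤ ((N - q).choose (s - q) : ℝ) * ((∏ i ∈ range q, (N - i) : ℕ) : ℝ) := by
        apply mul_le_mul_of_nonneg_left h1 (Nat.cast_nonneg _)
    _ = (((N - q).choose (s - q) * ∏ i ∈ range q, (N - i) : ℕ) : ℝ) := by push_cast; ring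
    _ = ((N.choose s * ∏ i ∈ range q, (s - i) : ℕ) : ℝ) := by rw [hid]
    _ = (N.choose s : ℝ) * ((∏ i ∈ range q, (s - i) : ℕ) : ℝ) := by push_cast; ring
    _ ≤ (N.choose s : ℝ) * (s:ℝ)^q := by
        apply mul_le_mul_of_nonneg_left h2 (Nat.cast_nonneg _)


noncomputable def Bset (r : ℕ) (W : Finset ℕ) (G : Finset (Finset ℕ)) (σ' : ℝ) : Finset (Finset ℕ) :=
  (Finset.powersetCard r W).filter (fun U =>
      ¬((1 - σ') * (pmCount W G : ℝ) / avgDeg r W G ≤ (phiSub W G U : ℝ) ∧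
        (phiSub W G U : ℝ) ≤ (1 + σ') * (pmCount W G : ℝ) / avgDeg r W G))


lemma mul_lt_mul_cancel_aux (u v c : ℝ) (hc : 0 < c) (h : u*c < v*c) : u < v :=
  (mul_lt_mul_iff_left₀ hc).1 h

lemma h6_helper (a δn Φ D b d D' : ℝ) (hΦ : 0 < Φ)
    (h : a*(1-δn)*Φ*D < b*Φ*d*D') : a*(1-δn)*D < b*d*D' := by
  have h' : (a*(1-δn)*D)*Φ < (b*d*D')*Φ := by nlinarith only [h]
  exact (mul_lt_mul_iff_left₀ hΦ).1 h'

lemma arith_h10 (σ δn a d : ℝ) (hσ0 : 0 < σ) (hσ1 : σ ≤ 1/2) (hδ0 : 0 < δn)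
    (hδσ : δn ≤ σ/32) (hd0 : 0 ≤ d) (ha0 : 0 ≤ a)
    (h9 : a*(1-δn) < (1-σ)*(1+σ/16)*d) :
    a < (1-(3/4)*σ)*d := by
  nlinarith [mul_nonneg hd0 (by linarith : (0:ℝ) ≤ σ/32 - δn),
    mul_nonneg (mul_nonneg hd0 hσ0.le) hδ0.le,
    mul_nonneg (mul_nonneg hd0 hσ0.le) hσ0.le,
    mul_nonneg hd0 hσ0.le]

lemma arith_final (σ K D d rδD bb : ℝ) (hσ0 : 0 < σ) (hK : 1 ≤ K) (hD0 : 0 < D)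
    (hbb0 : 0 ≤ bb)
    (hdK : D ≤ d*K) (hrδD : rδD*(32*K) ≤ σ*D) (hbblow : (3*σ/4)*d - rδD ≤ bb) :
    σ*D ≤ bb*(2*K) := by
  nlinarith [mul_le_mul_of_nonneg_left hdK hσ0.le,
    mul_le_mul_of_nonneg_left hbblow (by positivity : (0:ℝ) ≤ 2*K)]

set_option maxHeartbeats 2000000 in
lemma step_one (r n m : ℕ) (K σ δn : ℝ) (hK : 1 ≤ K) (hσ0 : 0 < σ) (hσ1 : σ ≤ 1/2)
    (hδ0 : 0 < δn) (hδsmall : δn ≤ σ/(32*r*K))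
    (hr : 3 ≤ r) (hn : 32*(r:ℝ) ≤ σ * n) (hm : 1 ≤ m)
    (Z : Finset ℕ) (hZ : Z ∈ Finset.powersetCard r (Finset.range n)) (x : ℕ) (hx : x ∈ Z)
    (H : Finset (Finset ℕ)) (hH : H ∈ Finset.powersetCard m (Kn n r))
    (hR : propR r (Finset.range n) H δn K)
    (hF : propF r (Finset.range n \ Z) (minus H Z) δn)
    (hbad : σ * n < (((Finset.range n \ Z).filter (fun y =>
        ¬((1 - σ) * (phiSub (Finset.range n) H Z : ℝ) * (deg H x : ℝ) /
            avgDeg r (Finset.range n) H ≤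
          (phiSub (Finset.range n) H (insert y (Z.erase x)) : ℝ)))).card : ℝ)) :
    σ^2 * r * m / (2*K) <
      ∑ A ∈ H, ((wt (Bset r (Finset.range n \ Z) (minus H Z) δn) n Z x A : ℝ)) := by
  rw [Finset.mem_powersetCard] at hZ hH
  obtain ⟨hZV, hZcard⟩ := hZ
  obtain ⟨hHKn, hHcard⟩ := hH
  have hK0 : (0:ℝ) < K := lt_of_lt_of_le one_pos hK
  have hr' : (3:ℝ) ≤ (r:ℝ) := by exact_mod_cast hr
  have hncast : (0:ℝ) ≤ (n:ℝ) := Nat.cast_nonneg n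
  have hσn : σ*(n:ℝ) ≤ (n:ℝ)/2 := by
    nlinarith only [mul_nonneg (by linarith only [hσ1] : (0:ℝ) ≤ 1/2 - σ) hncast]
  have hnr : (r:ℝ) + 3 ≤ (n:ℝ) := by linarith only [hn, hσn, hr']
  have hn0 : (0:ℝ) < n := by linarith only [hnr, hr']
  have hm0 : (0:ℝ) < m := by exact_mod_cast hm
  have hVcard : (Finset.range n).card = n := Finset.card_range n
  have hrn : r < n := by
    by_contra hcontra
    push_neg at hcontra
    have hc2 : (n:ℝ) ≤ r := by exact_mod_cast hcontra
    linarith only [hc2, hnr]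
  have hW'card : (Finset.range n \ Z).card = n - r := by
    rw [Finset.card_sdiff_of_subset hZV, hVcard, hZcard]
  have hW'cardR : (((Finset.range n \ Z).card : ℝ)) = (n:ℝ) - r := by
    rw [hW'card, Nat.cast_sub (le_of_lt hrn)]
  have hD : avgDeg r (Finset.range n) H = r * m / n := by
    rw [avgDeg, hHcard, hVcard]
  set D : ℝ := r * m / n with hDdef
  have hD0 : 0 < D := by rw [hDdef]; positivity
  set Φ : ℕ := phiSub (Finset.range n) H Z with hΦdef
  -- Φ ≥ 1
  have hΦpos : 1 ≤ Φ := by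
    by_contra hcon
    push_neg at hcon
    have hΦ0 : Φ = 0 := by omega
    have hempty : ((Finset.range n \ Z).filter (fun y =>
        ¬((1 - σ) * (phiSub (Finset.range n) H Z : ℝ) * (deg H x : ℝ) /
            avgDeg r (Finset.range n) H ≤
          (phiSub (Finset.range n) H (insert y (Z.erase x)) : ℝ)))) = ∅ := by
      apply Finset.filter_eq_empty_iff.2
      intro y _
      rw [not_not, ← hΦdef, hΦ0]
      push_cast
      rw [mul_zero, zero_mul, zero_div]
      exact Nat.cast_nonneg _
    rw [hempty] at hbad
    simp only [Finset.card_empty, Nat.cast_zero] at hbad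
    linarith only [hbad, mul_nonneg hσ0.le hncast]
  have hΦR : (1:ℝ) ≤ (Φ:ℝ) := by exact_mod_cast hΦpos
  have hΦ0' : (0:ℝ) < (Φ:ℝ) := by linarith only [hΦR]
  -- G := minus H Z nonempty
  have hGsub : minus H Z ⊆ H := Finset.filter_subset _ _
  have hGne : (minus H Z).Nonempty := by
    have hpos : 0 < Φ := hΦpos
    rw [hΦdef, phiSub, pmCount] at hpos
    obtain ⟨M, hM⟩ := Finset.card_pos.1 hpos
    rw [pmSet, Finset.mem_filter, Finset.mem_powerset] at hM
    obtain ⟨hMsub, _, hMbi⟩ := hM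
    have hW'ne : (Finset.range n \ Z).Nonempty := by
      rw [← Finset.card_pos, hW'card]; omega
    have hMne : M.Nonempty := by
      by_contra hMe
      rw [Finset.not_nonempty_iff_eq_empty] at hMe
      rw [hMe] at hMbi
      simp only [Finset.biUnion_empty] at hMbi
      obtain ⟨a, ha⟩ := hW'ne
      rw [← hMbi] at ha
      exact Finset.notMem_empty a ha
    obtain ⟨A, hA⟩ := hMne
    have hA2 := hMsub hA
    have hmem : A ∈ minus H Z := by
      simp only [minus, Finset.mem_filter] at hA2 ⊢
      tauto
    exact ⟨A, hmem⟩
  have hGcard : 1 ≤ (minus H Z).card := Finset.card_pos.2 hGne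
  set D' : ℝ := avgDeg r (Finset.range n \ Z) (minus H Z) with hD'def
  have hD'val : D' = r * ((minus H Z).card : ℝ) / ((n:ℝ) - r) := by
    rw [hD'def, avgDeg, hW'cardR]
  have hnrpos : (0:ℝ) < (n:ℝ) - r := by linarith only [hnr]
  have hD'0 : 0 < D' := by
    rw [hD'val]
    have h1 : (1:ℝ) ≤ ((minus H Z).card : ℝ) := by exact_mod_cast hGcard
    have hr0 : (0:ℝ) < (r:ℝ) := by linarith only [hr']
    have := mul_pos hr0 (lt_of_lt_of_le one_pos h1)
    positivity
  have hGm : ((minus H Z).card : ℝ) ≤ m := by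
    have := Finset.card_le_card hGsub
    rw [hHcard] at this
    exact_mod_cast this
  have hD'le : D' ≤ D * ((n:ℝ) / ((n:ℝ) - r)) := by
    have h2 : D * ((n:ℝ)/((n:ℝ)-r)) = (r:ℝ)*m/((n:ℝ)-r) := by
      rw [hDdef]; field_simp
    rw [h2, hD'val]
    have h3 : (r:ℝ) * ((minus H Z).card:ℝ) ≤ (r:ℝ)*(m:ℝ) :=
      mul_le_mul_of_nonneg_left hGm (Nat.cast_nonneg r)
    gcongr ?_ / _
  have hnnr : (n:ℝ)/((n:ℝ)-r) ≤ 1 + σ/16 := by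
    rw [div_le_iff₀ hnrpos]
    nlinarith only [hn, hσ0, hσ1, hr',
      mul_nonneg (by linarith only [hσ1] : (0:ℝ) ≤ 16 - σ) (by linarith only [hr'] : (0:ℝ) ≤ (r:ℝ))]
  obtain ⟨hR1, hR2, hR3⟩ := hR
  have hxV : x ∈ Finset.range n := hZV hx
  obtain ⟨hdup, hdlow⟩ := hR2 x hxV
  rw [hD] at hdup hdlow
  set d : ℕ := deg H x with hd
  have hd0 : (0:ℝ) ≤ d := Nat.cast_nonneg _
  have hrK : (1:ℝ) ≤ (r:ℝ)*K := by
    nlinarith only [hK, hr', hK0,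
      mul_le_mul_of_nonneg_left hK (by linarith only [hr'] : (0:ℝ) ≤ (r:ℝ))]
  have hδσ : δn ≤ σ/32 := by
    apply le_trans hδsmall
    rw [div_le_div_iff₀ (by positivity) (by norm_num)]
    linarith only [mul_nonneg hσ0.le (by linarith only [hrK] : (0:ℝ) ≤ (r:ℝ)*K - 1)]
  have hrδ : (r:ℝ)*δn*32*K ≤ σ := by
    have h1 : δn * (32*r*K) ≤ σ := by
      rw [← le_div_iff₀ (by positivity)]
      exact hδsmall
    linarith only [h1]
  have h1δ : (0:ℝ) < 1 - δn := by linarith only [hδσ, hσ1]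
  -- per bad y bound
  have key : ∀ y ∈ ((Finset.range n \ Z).filter (fun y =>
        ¬((1 - σ) * (phiSub (Finset.range n) H Z : ℝ) * (deg H x : ℝ) /
            avgDeg r (Finset.range n) H ≤
          (phiSub (Finset.range n) H (insert y (Z.erase x)) : ℝ)))),
      σ * D/(2*K) ≤ ((H.filter (fun A => x ∈ A ∧ A ∩ Z.erase x = ∅ ∧ y ∉ A ∧
        insert y (A.erase x) ∈ Bset r (Finset.range n \ Z) (minus H Z) δn)).card : ℝ) := by
    intro y hy
    rw [Finset.mem_filter] at hy
    obtain ⟨hyW', hybad⟩ := hy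
    rw [not_le] at hybad
    rw [hD, ← hΦdef, ← hd] at hybad
    set B := Bset r (Finset.range n \ Z) (minus H Z) δn with hBdef
    set 𝒜 := H.filter (fun A => x ∈ A ∧ A ∩ Z.erase x = ∅ ∧ y ∉ A ∧
        insert y (A.erase x) ∉ B) with h𝒜def
    set bb := H.filter (fun A => x ∈ A ∧ A ∩ Z.erase x = ∅ ∧ y ∉ A ∧
        insert y (A.erase x) ∈ B) with hbbdef
    have h𝒜mem : ∀ A ∈ 𝒜, A ∈ H ∧ x ∈ A ∧ A ∩ Z.erase x = ∅ ∧ y ∉ A := by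
      intro A hA
      rw [h𝒜def, Finset.mem_filter] at hA
      exact ⟨hA.1, hA.2.1, hA.2.2.1, hA.2.2.2.1⟩
    have hsum := pm_inj n r H hHKn Z hZV x hx y hyW' 𝒜 h𝒜mem
    have hterm : ∀ A ∈ 𝒜, (1-δn)*(Φ:ℝ)/D' ≤
        (phiSub (Finset.range n \ Z) (minus H Z) (insert y (A.erase x)) : ℝ) := by
      intro A hA
      obtain ⟨hAH, hxA, hAZ', hyA⟩ := h𝒜mem A hA
      have hAKn := hHKn hAH
      rw [Kn, Finset.mem_powersetCard] at hAKn
      obtain ⟨hAV, hAcard⟩ := hAKn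
      have hUmem : insert y (A.erase x) ∈ Finset.powersetCard r (Finset.range n \ Z) := by
        rw [Finset.mem_powersetCard]
        constructor
        · intro a ha
          rw [Finset.mem_insert] at ha
          rcases ha with rfl | ha
          · exact hyW'
          · rw [Finset.mem_erase] at ha
            rw [Finset.mem_sdiff]
            refine ⟨hAV ha.2, ?_⟩
            intro haZ
            have hmem2 : a ∈ A ∩ Z.erase x :=
              Finset.mem_inter.2 ⟨ha.2, Finset.mem_erase.2 ⟨ha.1, haZ⟩⟩
            rw [hAZ'] at hmem2
            exact Finset.notMem_empty a hmem2
        · rw [Finset.card_insert_of_notMem (fun h => hyA (Finset.mem_of_mem_erase h)),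
            Finset.card_erase_of_mem hxA, hAcard]
          omega
      have hUnotB : insert y (A.erase x) ∉ B := by
        rw [h𝒜def, Finset.mem_filter] at hA
        exact hA.2.2.2.2
      rw [hBdef, Bset] at hUnotB
      rw [Finset.mem_filter, not_and, not_not] at hUnotB
      have hUineq := (hUnotB hUmem).1
      rw [← hD'def] at hUineq
      have hΦeq : pmCount (Finset.range n \ Z) (minus H Z) = Φ := rfl
      rw [hΦeq] at hUineq
      exact hUineq
    have hglow : (𝒜.card : ℝ) * ((1-δn)*(Φ:ℝ)/D') ≤
        (phiSub (Finset.range n) H (insert y (Z.erase x)) : ℝ) := by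
      calc (𝒜.card : ℝ) * ((1-δn)*(Φ:ℝ)/D')
          = ∑ _A ∈ 𝒜, ((1-δn)*(Φ:ℝ)/D') := by rw [Finset.sum_const, nsmul_eq_mul]
        _ ≤ ∑ A ∈ 𝒜, (phiSub (Finset.range n \ Z) (minus H Z) (insert y (A.erase x)) : ℝ) :=
            Finset.sum_le_sum hterm
        _ = ((∑ A ∈ 𝒜, phiSub (Finset.range n \ Z) (minus H Z) (insert y (A.erase x)) : ℕ) : ℝ) := by
            rw [Nat.cast_sum]
        _ ≤ _ := by exact_mod_cast hsum
    have h4 : (𝒜.card:ℝ) * ((1-δn)*(Φ:ℝ)/D') < (1-σ)*(Φ:ℝ)*(d:ℝ)/D :=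
      lt_of_le_of_lt hglow hybad
    have h5 : (𝒜.card:ℝ)*(1-δn)*(Φ:ℝ)*D < (1-σ)*(Φ:ℝ)*(d:ℝ)*D' := by
      rw [show (𝒜.card:ℝ)*((1-δn)*(Φ:ℝ)/D') = ((𝒜.card:ℝ)*(1-δn)*(Φ:ℝ))/D' from by ring,
        show (1-σ)*(Φ:ℝ)*(d:ℝ)/D = ((1-σ)*(Φ:ℝ)*(d:ℝ))/D from rfl] at h4
      exact (div_lt_div_iff₀ hD'0 hD0).1 h4
    have h6 : (𝒜.card:ℝ)*(1-δn)*D < (1-σ)*(d:ℝ)*D' := by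
      apply h6_helper _ _ _ _ _ _ _ hΦ0'
      nlinarith only [h5]
    have h1σ : (0:ℝ) ≤ (1-σ)*(d:ℝ) :=
      mul_nonneg (by linarith only [hσ1] : (0:ℝ) ≤ 1-σ) hd0
    have h7 : (𝒜.card:ℝ)*(1-δn)*D < (1-σ)*(d:ℝ)*(D*((n:ℝ)/((n:ℝ)-r))) :=
      lt_of_lt_of_le h6 (mul_le_mul_of_nonneg_left hD'le h1σ)
    have h8 : (𝒜.card:ℝ)*(1-δn) < (1-σ)*(d:ℝ)*((n:ℝ)/((n:ℝ)-r)) := by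
      have h7' := h7
      rw [show (1-σ)*(d:ℝ)*(D*((n:ℝ)/((n:ℝ)-r))) = ((1-σ)*(d:ℝ)*((n:ℝ)/((n:ℝ)-r)))*D from by ring,
        show (𝒜.card:ℝ)*(1-δn)*D = ((𝒜.card:ℝ)*(1-δn))*D from by ring] at h7'
      exact (mul_lt_mul_iff_left₀ hD0).1 h7'
    have h9 : (𝒜.card:ℝ)*(1-δn) < (1-σ)*(1+σ/16)*(d:ℝ) := by
      have hint := mul_le_mul_of_nonneg_left hnnr h1σ
      nlinarith only [h8, hint]
    have h10 : (𝒜.card:ℝ) < (1-(3/4)*σ)*(d:ℝ) :=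
      arith_h10 σ δn _ _ hσ0 hσ1 hδ0 hδσ hd0 (Nat.cast_nonneg _) h9
    -- degree split
    have hds := deg_split H B Z x y
    rw [← h𝒜def, ← hbbdef, ← hd] at hds
    have hcode : ∀ z ∈ Z.erase x, (codeg H x z : ℝ) ≤ δn * D := by
      intro z hz
      rw [Finset.mem_erase] at hz
      have hco := hR3 x hxV z (hZV hz.2) (Ne.symm hz.1)
      rw [hD] at hco
      exact hco
    have hsumcode : ((∑ z ∈ Z.erase x, codeg H x z : ℕ) : ℝ) ≤ ((r:ℝ)-1)*(δn*D) := by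
      rw [Nat.cast_sum]
      calc ∑ z ∈ Z.erase x, (codeg H x z : ℝ) ≤ ∑ _z ∈ Z.erase x, δn*D :=
            Finset.sum_le_sum hcode
        _ = ((Z.erase x).card : ℝ) * (δn*D) := by rw [Finset.sum_const, nsmul_eq_mul]
        _ = ((r:ℝ)-1)*(δn*D) := by
            rw [Finset.card_erase_of_mem hx, hZcard]
            congr 1
            rw [Nat.cast_sub (by omega : 1 ≤ r)]
            norm_num
    have hxy : x ≠ y := by
      rw [Finset.mem_sdiff] at hyW'
      intro h; exact hyW'.2 (h ▸ hx)
    have hyV : y ∈ Finset.range n := (Finset.mem_sdiff.1 hyW').1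
    have hcodey : (codeg H x y : ℝ) ≤ δn * D := by
      have hco := hR3 x hxV y hyV hxy
      rw [hD] at hco
      exact hco
    have hdsR : (d:ℝ) ≤ (𝒜.card:ℝ) + ((r:ℝ)-1)*(δn*D) + δn*D + (bb.card:ℝ) := by
      have hdsC : (d:ℝ) ≤ (𝒜.card:ℝ) + ((∑ z ∈ Z.erase x, codeg H x z : ℕ):ℝ)
          + (codeg H x y : ℝ) + (bb.card:ℝ) := by exact_mod_cast hds
      linarith only [hdsC, hsumcode, hcodey]
    -- conclude
    rw [div_le_iff₀ (by positivity : (0:ℝ) < 2*K)]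
    have hdK : D ≤ (d:ℝ)*K := by
      rw [div_le_iff₀ hK0] at hdlow
      exact hdlow
    have hrδD : (r:ℝ)*(δn*D)*(32*K) ≤ σ*D := by
      nlinarith only [hrδ, hD0]
    have hbblow : (3*σ/4)*(d:ℝ) - (r:ℝ)*(δn*D) ≤ (bb.card:ℝ) := by
      linarith only [hdsR, h10]
    exact arith_final σ K D (d:ℝ) ((r:ℝ)*(δn*D)) (bb.card:ℝ) hσ0 hK hD0
      (Nat.cast_nonneg _) hdK hrδD hbblow
  -- sum over bad ys
  set badset := ((Finset.range n \ Z).filter (fun y =>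
        ¬((1 - σ) * (phiSub (Finset.range n) H Z : ℝ) * (deg H x : ℝ) /
            avgDeg r (Finset.range n) H ≤
          (phiSub (Finset.range n) H (insert y (Z.erase x)) : ℝ)))) with hbadset
  have hc0 : (0:ℝ) < σ * D/(2*K) := by positivity
  have hstep : σ^2 * r * m / (2*K) < (badset.card:ℝ) * (σ * D/(2*K)) := by
    have hnne : (n:ℝ) ≠ 0 := ne_of_gt hn0
    have hKne : K ≠ 0 := ne_of_gt hK0
    have heq : σ * (n:ℝ) * (σ * D/(2*K)) = σ^2 * r * m / (2*K) := by
      rw [hDdef]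
      field_simp
    rw [← heq]
    exact mul_lt_mul_of_pos_right hbad hc0
  calc σ^2 * r * m / (2*K) < (badset.card:ℝ) * (σ * D/(2*K)) := hstep
    _ = ∑ _y ∈ badset, σ * D/(2*K) := by rw [Finset.sum_const, nsmul_eq_mul]
    _ ≤ ∑ y ∈ badset, ((H.filter (fun A => x ∈ A ∧ A ∩ Z.erase x = ∅ ∧ y ∉ A ∧
        insert y (A.erase x) ∈ Bset r (Finset.range n \ Z) (minus H Z) δn)).card : ℝ) :=
        Finset.sum_le_sum key
    _ ≤ ∑ y ∈ Finset.range n \ Z, ((H.filter (fun A => x ∈ A ∧ A ∩ Z.erase x = ∅ ∧ y ∉ A ∧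
        insert y (A.erase x) ∈ Bset r (Finset.range n \ Z) (minus H Z) δn)).card : ℝ) := by
        apply Finset.sum_le_sum_of_subset_of_nonneg (Finset.filter_subset _ _)
        intro i _ _; positivity
    _ = ((∑ y ∈ Finset.range n \ Z, (H.filter (fun A => x ∈ A ∧ A ∩ Z.erase x = ∅ ∧ y ∉ A ∧
        insert y (A.erase x) ∈ Bset r (Finset.range n \ Z) (minus H Z) δn)).card : ℕ) : ℝ) := by
        rw [Nat.cast_sum]
    _ = _ := by
        rw [fubini_wt, Nat.cast_sum]

lemma div_le_div_same_den (a b c : ℝ) (h : a ≤ b) (hc : 0 ≤ c) : a/c ≤ b/c := by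
  rcases eq_or_lt_of_le hc with rfl | h0
  · simp
  · exact (div_le_div_iff_of_pos_right h0).2 h

set_option maxHeartbeats 4000000 in
lemma lemma_C_aux (r : ℕ) (hr : 3 ≤ r) (ε : ℝ) (hε : 0 < ε) (K : ℝ) (hK : 1 ≤ K)
    (δ : ℕ → ℝ) (hδpos : ∀ n, 0 < δ n)
    (hδ : Filter.Tendsto δ Filter.atTop (nhds 0))
    (σ : ℝ) (hσ0 : 0 < σ) (hσhalf : σ ≤ 1/2) (k : ℝ) (hk : 0 < k) :
    ∃ n₀ : ℕ, ∀ n : ℕ, n₀ ≤ n → r ∣ n →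
      ∀ m : ℕ, (1 + ε) * ((n : ℝ) / r) * Real.log n < m → m ≤ n.choose r →
      ∀ Z ∈ Finset.powersetCard r (Finset.range n), ∀ x ∈ Z,
      (((Finset.powersetCard m (Kn n r)).filter
          (fun H => propR r (Finset.range n) H (δ n) K ∧
            propF r (Finset.range n \ Z) (minus H Z) (δ n) ∧
            σ * n <
              (((Finset.range n \ Z).filter (fun y =>
                  ¬((1 - σ) * (phiSub (Finset.range n) H Z : ℝ) * (deg H x : ℝ) /
                      avgDeg r (Finset.range n) H ≤
                    (phiSub (Finset.range n) H (insert y (Z.erase x)) : ℝ)))).card : ℝ))).card : ℝ) /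
        ((Finset.powersetCard m (Kn n r)).card : ℝ) ≤ (n : ℝ) ^ (-k) := by
  have hK0 : (0:ℝ) < K := lt_of_lt_of_le one_pos hK
  have hr0 : 0 < r := by omega
  have hrR : (3:ℝ) ≤ (r:ℝ) := by exact_mod_cast hr
  set c : ℝ := 4*K*k/σ^2 + 1 with hc
  have hc0 : 0 < c := by positivity
  set δ₀ : ℝ := min (σ/(32*r*K)) (σ^2 * Real.exp (-c) / (16*K^2*r)) with hδ₀
  have hδ₀pos : 0 < δ₀ := by
    apply lt_min
    · positivity
    · positivity
  obtain ⟨N₁, hN₁⟩ : ∃ N, ∀ n ≥ N, δ n < δ₀ :=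
    Filter.eventually_atTop.1 (hδ.eventually (gt_mem_nhds hδ₀pos))
  refine ⟨N₁ + ⌈Real.exp (8*K/σ^2)⌉₊ + ⌈32*(r:ℝ)/σ⌉₊ + r + 4, ?_⟩
  intro n hn _hdvd m hm1 hm2 Z hZ x hx
  -- basic n facts
  have hnN₁ : N₁ ≤ n := by omega
  have hδn : δ n ≤ δ₀ := le_of_lt (hN₁ n hnN₁)
  have hδn0 : 0 < δ n := hδpos n
  have hnexp : Real.exp (8*K/σ^2) ≤ (n:ℝ) := by
    have h1 : (⌈Real.exp (8*K/σ^2)⌉₊ : ℝ) ≤ n := by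
      have : ⌈Real.exp (8*K/σ^2)⌉₊ ≤ n := by omega
      exact_mod_cast this
    exact le_trans (Nat.le_ceil _) h1
  have hn0' : 0 < n := by omega
  have hn0 : (0:ℝ) < n := by exact_mod_cast hn0'
  have hlogn : 8*K/σ^2 ≤ Real.log n := by
    rw [← Real.log_exp (8*K/σ^2)]
    exact Real.log_le_log (Real.exp_pos _) hnexp
  have hlogn0 : (0:ℝ) ≤ Real.log n := le_trans (by positivity) hlogn
  have hn32 : 32*(r:ℝ) ≤ σ * n := by
    have h1 : (⌈32*(r:ℝ)/σ⌉₊ : ℝ) ≤ n := by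
      have : ⌈32*(r:ℝ)/σ⌉₊ ≤ n := by omega
      exact_mod_cast this
    have h2 : 32*(r:ℝ)/σ ≤ n := le_trans (Nat.le_ceil _) h1
    rw [div_le_iff₀ hσ0] at h2
    linarith [h2]
  have hnr4 : r + 4 ≤ n := by omega
  have hrn : r < n := by omega
  rw [Finset.mem_powersetCard] at hZ
  obtain ⟨hZV, hZcard⟩ := hZ
  have hZmem : Z ∈ Finset.powersetCard r (Finset.range n) :=
    Finset.mem_powersetCard.2 ⟨hZV, hZcard⟩
  -- m facts
  have hrm : (n:ℝ) * Real.log n < (r:ℝ) * m := by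
    have h1 : (1+ε) * ((n:ℝ)/r) * Real.log n * r < (m:ℝ) * r :=
      mul_lt_mul_of_pos_right hm1 (by positivity)
    have h2 : (1+ε) * ((n:ℝ)/r) * Real.log n * r = (1+ε) * ((n:ℝ) * Real.log n) := by
      field_simp
    rw [h2] at h1
    nlinarith only [h1, mul_nonneg hε.le (mul_nonneg hn0.le hlogn0), mul_nonneg hn0.le hlogn0]
  have hm1' : 1 ≤ m := by
    by_contra hcon
    push_neg at hcon
    have : m = 0 := by omega
    rw [this] at hrm
    simp at hrm
    nlinarith only [mul_nonneg hn0.le hlogn0, hrm]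
  have hm0 : (0:ℝ) < m := by exact_mod_cast hm1'
  -- main objects
  set W' := Finset.range n \ Z with hW'
  have hW'card : W'.card = n - r := by
    rw [hW', Finset.card_sdiff_of_subset hZV, Finset.card_range, hZcard]
  set E0 := (Kn n r).filter (fun A => A ∩ Z = ∅) with hE0
  set E1 := (Kn n r).filter (fun A => ¬ A ∩ Z = ∅) with hE1
  set N1 := E1.card with hN1def
  set t : ℝ := σ^2*r*m/(2*K) with ht
  have ht0 : 0 < t := by rw [ht]; positivity
  set q : ℕ := ⌈t/(2*(n:ℝ))⌉₊ with hq
  set θ : ℝ := 16*K^2*r*(δ n)/σ^2 with hθ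
  have hθ0 : 0 < θ := by rw [hθ]; positivity
  set numer := ((Finset.powersetCard m (Kn n r)).filter
          (fun H => propR r (Finset.range n) H (δ n) K ∧
            propF r (Finset.range n \ Z) (minus H Z) (δ n) ∧
            σ * n <
              (((Finset.range n \ Z).filter (fun y =>
                  ¬((1 - σ) * (phiSub (Finset.range n) H Z : ℝ) * (deg H x : ℝ) /
                      avgDeg r (Finset.range n) H ≤
                    (phiSub (Finset.range n) H (insert y (Z.erase x)) : ℝ)))).card : ℝ))) with hnumer
  -- t ≥ 4n and q bounds
  have ht4n : 4*(n:ℝ) ≤ t := by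
    rw [ht, le_div_iff₀ (by positivity : (0:ℝ) < 2*K)]
    have h1 : 8*K ≤ σ^2 * Real.log n := by
      rw [div_le_iff₀ (by positivity : (0:ℝ) < σ^2)] at hlogn
      linarith only [hlogn]
    linarith only [mul_nonneg (sq_nonneg σ) (by linarith only [hrm] : (0:ℝ) ≤ (r:ℝ)*m - n*Real.log n),
      mul_nonneg hn0.le (by linarith only [h1] : (0:ℝ) ≤ σ^2*Real.log n - 8*K)]
  have hqlow : t/(2*(n:ℝ)) ≤ (q:ℝ) := Nat.le_ceil _
  have hqup : (q:ℝ) < t/(2*(n:ℝ)) + 1 := Nat.ceil_lt_add_one (by positivity)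
  have hq34 : (q:ℝ)*n ≤ 3/4*t := by
    have h1 : (q:ℝ)*n < (t/(2*(n:ℝ)) + 1)*n := mul_lt_mul_of_pos_right hqup hn0
    have h2 : (t/(2*(n:ℝ)))*n = t/2 := by field_simp
    rw [add_mul, h2] at h1
    linarith [ht4n]
  have hqlogn : σ^2*Real.log n/(4*K) ≤ (q:ℝ) := by
    refine le_trans ?_ hqlow
    have h0 : t/(2*(n:ℝ)) = σ^2*((r:ℝ)*m)/(4*K*n) := by
      rw [ht]; field_simp; ring
    rw [h0, div_le_div_iff₀ (by positivity) (by positivity)]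
    linarith only [mul_nonneg (mul_nonneg (sq_nonneg σ) hK0.le)
      (by linarith only [hrm] : (0:ℝ) ≤ (r:ℝ)*m - n*Real.log n)]
  -- N1 bounds
  have hxV : x ∈ Finset.range n := hZV hx
  have hN1Cx : (n-1).choose (r-1) ≤ N1 := by
    rw [hN1def]
    have hcard : (Finset.powersetCard (r-1) ((Finset.range n).erase x)).card = (n-1).choose (r-1) := by
      rw [Finset.card_powersetCard, Finset.card_erase_of_mem hxV, Finset.card_range]
    rw [← hcard]
    apply Finset.card_le_card_of_injOn (fun U => insert x U)
    · intro U hU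
      rw [Finset.mem_coe, Finset.mem_powersetCard] at hU
      obtain ⟨hUsub, hUcard⟩ := hU
      rw [Finset.mem_coe, hE1, Finset.mem_filter]
      constructor
      · rw [Kn, Finset.mem_powersetCard]
        constructor
        · intro a ha
          rw [Finset.mem_insert] at ha
          rcases ha with rfl | ha
          · exact hxV
          · exact Finset.mem_of_mem_erase (hUsub ha)
        · rw [Finset.card_insert_of_notMem (fun hxU => (Finset.mem_erase.1 (hUsub hxU)).1 rfl),
            hUcard]
          omega
      · intro hcon
        have : x ∈ insert x U ∩ Z := Finset.mem_inter.2 ⟨Finset.mem_insert_self _ _, hx⟩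
        rw [hcon] at this
        exact Finset.notMem_empty x this
    · intro U hU U' hU' heq
      rw [Finset.mem_coe, Finset.mem_powersetCard] at hU hU'
      have hxU : x ∉ U := fun h => (Finset.mem_erase.1 (hU.1 h)).1 rfl
      have hxU' : x ∉ U' := fun h => (Finset.mem_erase.1 (hU'.1 h)).1 rfl
      have := congrArg (fun S => Finset.erase S x) heq
      simpa [Finset.erase_insert hxU, Finset.erase_insert hxU'] using this
  have hCx4 : 4 ≤ (n-1).choose (r-1) := by
    have h1 : (n-1).choose (r-1) = (n-1).choose ((n-1)-(r-1)) := by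
      rw [Nat.choose_symm (by omega : r - 1 ≤ n - 1)]
    have h2 : (n-1)-(r-1) = n-r := by omega
    rw [h1, h2]
    have h3 : (n-r+1).choose (n-r) ≤ (n-1).choose (n-r) :=
      Nat.choose_le_choose _ (by omega : n-r+1 ≤ n-1)
    rw [Nat.choose_succ_self_right] at h3
    omega
  have hids : n * ((n-1).choose (r-1)) = r * (n.choose r) := by
    have := Nat.add_one_mul_choose_eq (n-1) (r-1)
    have h1 : n - 1 + 1 = n := by omega
    have h2 : r - 1 + 1 = r := by omega
    rw [h1, h2] at this
    rw [this]
    ring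
  have hN14 : (4:ℝ) ≤ (N1:ℝ) := by
    have : 4 ≤ N1 := le_trans hCx4 hN1Cx
    exact_mod_cast this
  have hrCnN1 : (r:ℝ) * (n.choose r) ≤ (n:ℝ) * N1 := by
    have h1 : (n:ℝ) * ((n-1).choose (r-1)) = (r:ℝ) * (n.choose r) := by exact_mod_cast hids
    rw [← h1]
    have h2 : ((n-1).choose (r-1) : ℝ) ≤ N1 := by exact_mod_cast hN1Cx
    exact mul_le_mul_of_nonneg_left h2 hn0.le
  have hqN14 : (q:ℝ) ≤ (N1:ℝ)/4 + 1 := by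
    have hrm2 : (r:ℝ)*m ≤ (r:ℝ)*(n.choose r) := by
      have hc : (m:ℝ) ≤ (n.choose r : ℝ) := by exact_mod_cast hm2
      exact mul_le_mul_of_nonneg_left hc (by positivity)
    have hσ2K : σ^2 ≤ K := by
      nlinarith only [hσ0, hσhalf, hK, mul_le_mul_of_nonneg_left hσhalf hσ0.le]
    have hA1 : t/(2*(n:ℝ)) = σ^2*((r:ℝ)*m)/(4*K*n) := by
      rw [ht]; field_simp; ring
    have hA2 : σ^2*((r:ℝ)*m)/(4*K*n) ≤ ((r:ℝ)*m)/(4*n) := by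
      rw [div_le_div_iff₀ (by positivity) (by positivity)]
      have hrm0 : (0:ℝ) ≤ (r:ℝ)*m := by positivity
      nlinarith only [mul_nonneg (mul_nonneg hrm0 hn0.le) (by linarith only [hσ2K] : (0:ℝ) ≤ K - σ^2)]
    have hA3 : ((r:ℝ)*m)/(4*n) ≤ (N1:ℝ)/4 := by
      rw [div_le_div_iff₀ (by positivity) (by norm_num)]
      linarith only [hrm2, hrCnN1]
    linarith only [hqup, hA1 ▸ (le_trans hA2 hA3)]
  have hN1q2 : (N1:ℝ)/2 ≤ (N1:ℝ) - q := by linarith [hqN14, hN14]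
  have hN1qpos : (0:ℝ) < (N1:ℝ) - q := by linarith [hN14, hN1q2]
  have hqN1 : q < N1 := by
    by_contra hcon
    push_neg at hcon
    have : (N1:ℝ) ≤ q := by exact_mod_cast hcon
    linarith [hN1qpos]
  -- per-fiber bound
  have hperG : ∀ G ∈ E0.powerset.filter (fun G => G.card ≤ m),
      ((numer.filter (fun H => minus H Z = G)).card : ℝ) ≤ θ^q * ((N1.choose (m - G.card) : ℕ) : ℝ) := by
    intro G hG
    rw [Finset.mem_filter, Finset.mem_powerset] at hG
    obtain ⟨hGE0, hGm⟩ := hG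
    set s := m - G.card with hs
    set BG := Bset r (Finset.range n \ Z) G (δ n) with hBG
    set w := wt BG n Z x with hw
    rcases Finset.eq_empty_or_nonempty (numer.filter (fun H => minus H Z = G)) with hemp | ⟨H₀, hH₀⟩
    · rw [hemp]
      simp only [Finset.card_empty, Nat.cast_zero]
      positivity
    have hfibsub : ∀ H ∈ numer.filter (fun H => minus H Z = G),
        H ∈ Finset.powersetCard m (Kn n r) ∧ minus H Z = G ∧
        propR r (Finset.range n) H (δ n) K ∧
        propF r (Finset.range n \ Z) (minus H Z) (δ n) ∧
        σ * n < (((Finset.range n \ Z).filter (fun y =>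
            ¬((1 - σ) * (phiSub (Finset.range n) H Z : ℝ) * (deg H x : ℝ) /
                avgDeg r (Finset.range n) H ≤
              (phiSub (Finset.range n) H (insert y (Z.erase x)) : ℝ)))).card : ℝ) := by
      intro H hH
      rw [Finset.mem_filter] at hH
      obtain ⟨hHn, hHG⟩ := hH
      rw [hnumer, Finset.mem_filter] at hHn
      exact ⟨hHn.1, hHG, hHn.2.1, hHn.2.2.1, hHn.2.2.2⟩
    obtain ⟨hH₀m, hH₀G, hH₀R, hH₀F, hH₀bad⟩ := hfibsub H₀ hH₀
    have hH₀sub : H₀ ⊆ Kn n r := (Finset.mem_powersetCard.1 hH₀m).1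
    have hH₀card : H₀.card = m := (Finset.mem_powersetCard.1 hH₀m).2
    -- each H in the fiber gives a bad T
    have hwn : ∀ A, w A ≤ n := fun A => wt_le _ _ _ _ _
    have hbadmap : ∀ H ∈ numer.filter (fun H => minus H Z = G),
        t < ((∑ A ∈ H.filter (fun A => ¬ A ∩ Z = ∅), w A : ℕ) : ℝ) := by
      intro H hH
      obtain ⟨hHm, hHG, hHR, hHF, hHbad⟩ := hfibsub H hH
      have hso := step_one r n m K σ (δ n) hK hσ0 hσhalf hδn0
        (le_trans hδn (min_le_left _ _)) hr hn32 hm1' Z hZmem x hx H hHm hHR hHF hHbad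
      rw [hHG] at hso
      rw [← ht, ← hBG, ← hw] at hso
      have hzero : ∀ A ∈ H.filter (fun A => A ∩ Z = ∅), w A = 0 := by
        intro A hA
        rw [Finset.mem_filter] at hA
        rw [hw, wt, if_neg]
        intro hcon
        have : x ∈ A ∩ Z := Finset.mem_inter.2 ⟨hcon.1, hx⟩
        rw [hA.2] at this
        exact Finset.notMem_empty x this
      have hsplit : ∑ A ∈ H, w A = ∑ A ∈ H.filter (fun A => ¬ A ∩ Z = ∅), w A := by
        rw [← Finset.sum_filter_add_sum_filter_not H (fun A => A ∩ Z = ∅) w,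
          Finset.sum_eq_zero hzero, zero_add]
      calc t < ∑ A ∈ H, (w A : ℝ) := hso
        _ = ((∑ A ∈ H, w A : ℕ) : ℝ) := by rw [Nat.cast_sum]
        _ = _ := by rw [hsplit]
    -- injection into bad T's
    set badT := (Finset.powersetCard s E1).filter (fun T => t < ((∑ A ∈ T, w A : ℕ) : ℝ)) with hbadT
    have hinj : (numer.filter (fun H => minus H Z = G)).card ≤ badT.card := by
      apply Finset.card_le_card_of_injOn (fun H => H.filter (fun A => ¬ A ∩ Z = ∅))
      · intro H hH
        obtain ⟨hHm, hHG, _, _, _⟩ := hfibsub H hH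
        rw [Finset.mem_powersetCard] at hHm
        obtain ⟨hHsub, hHcard⟩ := hHm
        rw [Finset.mem_coe, hbadT, Finset.mem_filter]
        constructor
        · rw [Finset.mem_powersetCard]
          constructor
          · intro A hA
            rw [Finset.mem_filter] at hA
            rw [hE1, Finset.mem_filter]
            exact ⟨hHsub hA.1, hA.2⟩
          · have hpart := Finset.card_filter_add_card_filter_not
              (s := H) (p := fun A => A ∩ Z = ∅)
            have hGeq : H.filter (fun A => A ∩ Z = ∅) = G := hHG
            rw [hGeq] at hpart
            beta_reduce
            omega
        · have := hbadmap H hH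
          have hsum_eq : ∑ A ∈ H.filter (fun A => ¬ A ∩ Z = ∅), w A
              = ∑ A ∈ H.filter (fun A => ¬ A ∩ Z = ∅), w A := rfl
          exact this
      · intro H hH H' hH' heq
        obtain ⟨_, hHG, _, _, _⟩ := hfibsub H (by exact hH)
        obtain ⟨_, hH'G, _, _, _⟩ := hfibsub H' (by exact hH')
        have e1 : H = G ∪ H.filter (fun A => ¬ A ∩ Z = ∅) := by
          rw [← hHG]
          exact (Finset.filter_union_filter_not_eq _ H).symm
        have e2 : H' = G ∪ H'.filter (fun A => ¬ A ∩ Z = ∅) := by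
          rw [← hH'G]
          exact (Finset.filter_union_filter_not_eq _ H').symm
        rw [e1, e2]
        simp only at heq
        rw [heq]
    -- W0 bound
    have hBGcard : ((BG.card : ℕ) : ℝ) ≤ δ n * (((n-r).choose r : ℕ) : ℝ) := by
      have hf : ((Bset r (Finset.range n \ Z) G (δ n)).card : ℝ)
          ≤ δ n * ((Finset.range n \ Z).card.choose r : ℕ) := by
        have hF' : propF r (Finset.range n \ Z) G (δ n) := by rw [← hH₀G]; exact hH₀F
        exact hF'
      rw [← hBG] at hf
      rw [show (Finset.range n \ Z).card = n - r from hW'card] at hf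
      exact_mod_cast hf
    have hW0 : ((∑ A ∈ E1, w A : ℕ) : ℝ) ≤ (r:ℝ) * (δ n) * ((n-r).choose r : ℕ) := by
      have h1 : ∑ A ∈ E1, w A ≤ ∑ U ∈ BG, U.card := sum_wt_le BG n Z x E1
      have h2 : ∑ U ∈ BG, U.card = BG.card * r := by
        rw [Finset.sum_congr rfl (fun U hU => ?_), Finset.sum_const, smul_eq_mul]
        have : U ∈ Finset.powersetCard r (Finset.range n \ Z) := by
          rw [hBG, Bset, Finset.mem_filter] at hU
          exact hU.1
        exact (Finset.mem_powersetCard.1 this).2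
      have h3 : ((∑ A ∈ E1, w A : ℕ) : ℝ) ≤ ((BG.card * r : ℕ) : ℝ) := by
        exact_mod_cast le_trans h1 (le_of_eq h2)
      rw [Nat.cast_mul] at h3
      calc ((∑ A ∈ E1, w A : ℕ) : ℝ) ≤ (BG.card : ℝ) * r := h3
        _ ≤ (δ n * ((n-r).choose r : ℕ)) * r :=
            mul_le_mul_of_nonneg_right hBGcard (Nat.cast_nonneg r)
        _ = (r:ℝ) * (δ n) * ((n-r).choose r : ℕ) := by ring
    -- s bound
    have hsK : ((s:ℕ) : ℝ) ≤ K*(r:ℝ)^2*m/n := by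
      have hpart := Finset.card_filter_add_card_filter_not
        (s := H₀) (p := fun A => A ∩ Z = ∅)
      have hGeq : H₀.filter (fun A => A ∩ Z = ∅) = G := hH₀G
      rw [hGeq, hH₀card] at hpart
      have hseq : (H₀.filter (fun A => ¬ A ∩ Z = ∅)).card = s := by omega
      have hmeet := card_meet_le H₀ Z
      rw [hseq] at hmeet
      obtain ⟨_, hR2, _⟩ := hH₀R
      have havg : avgDeg r (Finset.range n) H₀ = r * m / n := by
        rw [avgDeg, hH₀card, Finset.card_range]
      have hdegb : ∀ z ∈ Z, (deg H₀ z : ℝ) ≤ K * ((r:ℝ)*m/n) := by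
        intro z hz
        have := (hR2 z (hZV hz)).1
        rw [havg] at this
        exact this
      have hsum : ((∑ z ∈ Z, deg H₀ z : ℕ) : ℝ) ≤ (r:ℝ) * (K * ((r:ℝ)*m/n)) := by
        rw [Nat.cast_sum]
        calc ∑ z ∈ Z, (deg H₀ z : ℝ) ≤ ∑ _z ∈ Z, K * ((r:ℝ)*m/n) := Finset.sum_le_sum hdegb
          _ = (Z.card : ℝ) * (K * ((r:ℝ)*m/n)) := by rw [Finset.sum_const, nsmul_eq_mul]
          _ = (r:ℝ) * (K * ((r:ℝ)*m/n)) := by rw [hZcard]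
      have hcast : ((s:ℕ):ℝ) ≤ ((∑ z ∈ Z, deg H₀ z : ℕ) : ℝ) := by exact_mod_cast hmeet
      calc ((s:ℕ):ℝ) ≤ (r:ℝ) * (K * ((r:ℝ)*m/n)) := le_trans hcast hsum
        _ = K*(r:ℝ)^2*m/n := by ring
    -- q < s
    have hsn : t < (s:ℝ)*n := by
      have hT₀ := hbadmap H₀ hH₀
      have hT₀card : (H₀.filter (fun A => ¬ A ∩ Z = ∅)).card = s := by
        have hpart := Finset.card_filter_add_card_filter_not
          (s := H₀) (p := fun A => A ∩ Z = ∅)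
        have hGeq : H₀.filter (fun A => A ∩ Z = ∅) = G := hH₀G
        rw [hGeq, hH₀card] at hpart
        omega
      have hsumn : (∑ A ∈ H₀.filter (fun A => ¬ A ∩ Z = ∅), w A : ℕ) ≤ s * n := by
        calc (∑ A ∈ H₀.filter (fun A => ¬ A ∩ Z = ∅), w A : ℕ)
            ≤ ∑ _A ∈ H₀.filter (fun A => ¬ A ∩ Z = ∅), n :=
              Finset.sum_le_sum (fun A _ => hwn A)
          _ = s * n := by rw [Finset.sum_const, smul_eq_mul, hT₀card]
      have : ((∑ A ∈ H₀.filter (fun A => ¬ A ∩ Z = ∅), w A : ℕ) : ℝ) ≤ (s:ℝ)*n := by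
        exact_mod_cast hsumn
      linarith [hT₀]
    have hqs : q < s := by
      by_contra hcon
      push_neg at hcon
      have h1 : (s:ℝ) ≤ q := by exact_mod_cast hcon
      have h2 : (s:ℝ)*n ≤ (q:ℝ)*n := mul_le_mul_of_nonneg_right h1 hn0.le
      linarith [hq34, hsn, ht0]
    have hsN1 : s ≤ N1 := by
      have hT₀mem : H₀.filter (fun A => ¬ A ∩ Z = ∅) ⊆ E1 := by
        intro A hA
        rw [Finset.mem_filter] at hA
        rw [hE1, Finset.mem_filter]
        exact ⟨hH₀sub hA.1, hA.2⟩
      have hT₀card : (H₀.filter (fun A => ¬ A ∩ Z = ∅)).card = s := by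
        have hpart := Finset.card_filter_add_card_filter_not
          (s := H₀) (p := fun A => A ∩ Z = ∅)
        have hGeq : H₀.filter (fun A => A ∩ Z = ∅) = G := hH₀G
        rw [hGeq, hH₀card] at hpart
        omega
      rw [← hT₀card, hN1def]
      exact Finset.card_le_card hT₀mem
    -- counting bound
    have hcount := badT_count w n hwn E1 s q t ht0 hq34
    rw [← hbadT, ← hN1def] at hcount
    -- ratio bound
    have hratio := choose_ratio_le q N1 s (le_of_lt hqs) hsN1 hqN1
    -- numeric: W0 * s ≤ θ * (t/4) * (N1 - q)
    have hWts : ((∑ A ∈ E1, w A : ℕ) : ℝ) * (s:ℝ) ≤ θ * (t/4) * ((N1:ℝ) - q) := by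
      have hθt : θ * (t/4) * ((N1:ℝ) - q) = (θ*t/4) * ((N1:ℝ) - q) := by ring
      have hCle : ((n-r).choose r : ℝ) ≤ (n.choose r : ℝ) := by
        exact_mod_cast Nat.choose_le_choose r (by omega : n - r ≤ n)
      have hC0 : (0:ℝ) ≤ (n.choose r : ℝ) := Nat.cast_nonneg _
      have hlhs : ((∑ A ∈ E1, w A : ℕ) : ℝ) * (s:ℝ)
          ≤ ((r:ℝ) * (δ n) * (n.choose r : ℝ)) * (K*(r:ℝ)^2*m/n) := by
        apply mul_le_mul _ hsK (Nat.cast_nonneg _) _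
        · calc ((∑ A ∈ E1, w A : ℕ) : ℝ) ≤ (r:ℝ) * (δ n) * ((n-r).choose r : ℕ) := hW0
            _ ≤ (r:ℝ) * (δ n) * (n.choose r : ℝ) := by
                apply mul_le_mul_of_nonneg_left hCle
                positivity
        · positivity
      have hrhs : ((r:ℝ) * (δ n) * (n.choose r : ℝ)) * (K*(r:ℝ)^2*m/n)
          ≤ θ * (t/4) * ((N1:ℝ) - q) := by
        have hθteq : θ * (t/4) = 2*K*(r:ℝ)^2*(δ n)*m := by
          rw [hθ, ht]
          field_simp
          ring
        rw [hθteq]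
        have hN1b : (r:ℝ)*(n.choose r : ℝ)/(2*n) ≤ (N1:ℝ) - q := by
          have h1 : (r:ℝ)*(n.choose r : ℝ)/(2*n) ≤ (N1:ℝ)/2 := by
            rw [div_le_div_iff₀ (by positivity) (by norm_num)]
            linarith only [hrCnN1]
          linarith [hN1q2]
        calc ((r:ℝ) * (δ n) * (n.choose r : ℝ)) * (K*(r:ℝ)^2*m/n)
            = (2*K*(r:ℝ)^2*(δ n)*m) * ((r:ℝ)*(n.choose r : ℝ)/(2*n)) := by
              field_simp
          _ ≤ (2*K*(r:ℝ)^2*(δ n)*m) * ((N1:ℝ) - q) := by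
              apply mul_le_mul_of_nonneg_left hN1b
              positivity
      linarith [hlhs, hrhs]
    -- combine
    have hfibR : ((numer.filter (fun H => minus H Z = G)).card : ℝ) ≤ θ^q * (N1.choose s : ℝ) := by
      set fibR := ((numer.filter (fun H => minus H Z = G)).card : ℝ) with hfibRdef
      have hfb : fibR ≤ (badT.card : ℝ) := by
        rw [hfibRdef]; exact_mod_cast hinj
      set P : ℝ := ((t/4)*((N1:ℝ)-q))^q with hP
      have hP0 : 0 < P := by rw [hP]; positivity
      have c1 : fibR * (t/4)^q ≤ (((∑ A ∈ E1, w A)^q * ((N1 - q).choose (s - q)) : ℕ) : ℝ) := by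
        calc fibR * (t/4)^q ≤ (badT.card : ℝ) * (t/4)^q := by
              apply mul_le_mul_of_nonneg_right hfb
              positivity
          _ ≤ _ := hcount
      have c2 : fibR * P ≤ (N1.choose s : ℝ) * (((∑ A ∈ E1, w A : ℕ):ℝ) * (s:ℝ))^q := by
        have e1 : fibR * P = (fibR * (t/4)^q) * (((N1:ℝ)-q))^q := by
          rw [hP, mul_pow]; ring
        rw [e1]
        calc (fibR * (t/4)^q) * (((N1:ℝ)-q))^q
            ≤ (((∑ A ∈ E1, w A)^q * ((N1 - q).choose (s - q)) : ℕ) : ℝ) * (((N1:ℝ)-q))^q := by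
              apply mul_le_mul_of_nonneg_right c1
              positivity
          _ = (((∑ A ∈ E1, w A : ℕ):ℝ))^q * ((((N1 - q).choose (s - q)) : ℝ) * (((N1:ℝ)-q))^q) := by
              push_cast
              ring
          _ ≤ (((∑ A ∈ E1, w A : ℕ):ℝ))^q * ((N1.choose s : ℝ) * (s:ℝ)^q) := by
              apply mul_le_mul_of_nonneg_left hratio
              positivity
          _ = (N1.choose s : ℝ) * (((∑ A ∈ E1, w A : ℕ):ℝ) * (s:ℝ))^q := by
              rw [mul_pow]
              ring
      have c3 : (((∑ A ∈ E1, w A : ℕ):ℝ) * (s:ℝ))^q ≤ (θ * (t/4) * ((N1:ℝ)-q))^q := by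
        apply pow_le_pow_left₀ (by positivity) hWts
      have c4 : (N1.choose s : ℝ) * (θ * (t/4) * ((N1:ℝ)-q))^q = (N1.choose s : ℝ) * θ^q * P := by
        rw [hP]
        rw [show θ * (t/4) * ((N1:ℝ)-q) = θ * ((t/4)*((N1:ℝ)-q)) from mul_assoc _ _ _]
        rw [mul_pow θ ((t/4)*((N1:ℝ)-q)) q, ← mul_assoc]
      have c5 : fibR * P ≤ ((N1.choose s : ℝ) * θ^q) * P := by
        calc fibR * P ≤ (N1.choose s : ℝ) * (((∑ A ∈ E1, w A : ℕ):ℝ) * (s:ℝ))^q := c2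
          _ ≤ (N1.choose s : ℝ) * (θ * (t/4) * ((N1:ℝ)-q))^q := by
              apply mul_le_mul_of_nonneg_left c3
              positivity
          _ = ((N1.choose s : ℝ) * θ^q) * P := c4
      have := (mul_le_mul_iff_left₀ hP0).1 c5
      linarith [this]
    exact hfibR
  -- sum over fibers
  have hfiber : numer.card = ∑ G ∈ E0.powerset.filter (fun G => G.card ≤ m),
      (numer.filter (fun H => minus H Z = G)).card := by
    apply Finset.card_eq_sum_card_fiberwise
    intro H hH
    rw [Finset.mem_coe] at hH; simp only [hnumer, Finset.mem_filter, Finset.mem_powersetCard] at hH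
    obtain ⟨⟨hHsub, hHcard⟩, _⟩ := hH
    rw [Finset.mem_coe, Finset.mem_filter, Finset.mem_powerset]
    constructor
    · intro A hA
      beta_reduce at hA
      rw [minus, Finset.mem_filter] at hA
      rw [hE0, Finset.mem_filter]
      exact ⟨hHsub hA.1, hA.2⟩
    · calc (minus H Z).card ≤ H.card := Finset.card_le_card (Finset.filter_subset _ _)
        _ = m := hHcard
  have hdisj : ∀ A ∈ E0, A ∉ E1 := by
    intro A hA hA'
    rw [hE0, Finset.mem_filter] at hA
    rw [hE1, Finset.mem_filter] at hA'
    exact hA'.2 hA.2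
  have hunion : E0 ∪ E1 = Kn n r := Finset.filter_union_filter_not_eq _ _
  have hKncard : (Kn n r).card = n.choose r := by
    rw [Kn, Finset.card_powersetCard, Finset.card_range]
  have hsumle : ∑ G ∈ E0.powerset.filter (fun G => G.card ≤ m), (N1.choose (m - G.card))
      ≤ (n.choose r).choose m := by
    have := sum_choose_le E0 E1 hdisj m
    rw [hunion, hKncard] at this
    exact this
  have hdenom : ((Finset.powersetCard m (Kn n r)).card : ℝ) = ((n.choose r).choose m : ℝ) := by
    rw [Finset.card_powersetCard, hKncard]
  have hdenom0 : (0:ℝ) < ((n.choose r).choose m : ℝ) := by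
    have := Nat.choose_pos hm2
    exact_mod_cast this
  -- B: numer ≤ θ^q * denom
  have hB : (numer.card : ℝ) ≤ θ^q * ((n.choose r).choose m : ℝ) := by
    calc (numer.card : ℝ)
        = ∑ G ∈ E0.powerset.filter (fun G => G.card ≤ m),
            ((numer.filter (fun H => minus H Z = G)).card : ℝ) := by
          rw [hfiber, Nat.cast_sum]
      _ ≤ ∑ G ∈ E0.powerset.filter (fun G => G.card ≤ m),
            θ^q * ((N1.choose (m - G.card) : ℕ) : ℝ) := Finset.sum_le_sum hperG
      _ = θ^q * ∑ G ∈ E0.powerset.filter (fun G => G.card ≤ m),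
            ((N1.choose (m - G.card) : ℕ) : ℝ) := by rw [Finset.mul_sum]
      _ ≤ θ^q * ((n.choose r).choose m : ℝ) := by
          apply mul_le_mul_of_nonneg_left _ (by positivity)
          rw [← Nat.cast_sum]
          exact_mod_cast hsumle
  -- C: θ^q ≤ n^(-k)
  have hθexp : θ ≤ Real.exp (-c) := by
    have h1 : δ n ≤ σ^2 * Real.exp (-c) / (16*K^2*r) := le_trans hδn (min_le_right _ _)
    rw [hθ, div_le_iff₀ (by positivity : (0:ℝ) < σ^2)]
    rw [le_div_iff₀ (by positivity : (0:ℝ) < 16*K^2*(r:ℝ))] at h1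
    linarith only [h1]
  have hC : θ^q ≤ (n:ℝ)^(-k) := by
    have h1 : θ^q ≤ (Real.exp (-c))^q := pow_le_pow_left₀ hθ0.le hθexp q
    have h2 : (Real.exp (-c))^q = Real.exp ((q:ℝ) * (-c)) := by
      rw [← Real.exp_nat_mul]
    have h3 : (n:ℝ)^(-k) = Real.exp (Real.log n * (-k)) := by
      rw [Real.rpow_def_of_pos hn0]
    rw [h2] at h1
    rw [h3]
    refine le_trans h1 (Real.exp_le_exp.2 ?_)
    have h4 : k * Real.log n ≤ c * q := by
      have e1 : σ^2*Real.log n ≤ (q:ℝ)*(4*K) := by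
        rw [div_le_iff₀ (by positivity : (0:ℝ) < 4*K)] at hqlogn
        exact hqlogn
      have e2 : 4*K*k ≤ c*σ^2 := by
        have he : c*σ^2 = 4*K*k + σ^2 := by
          rw [hc]; field_simp
        rw [he]
        nlinarith only [sq_nonneg σ]
      have e3 : k*(σ^2*Real.log n) ≤ k*((q:ℝ)*(4*K)) := mul_le_mul_of_nonneg_left e1 hk.le
      have e4 : (4*K*k)*(q:ℝ) ≤ (c*σ^2)*(q:ℝ) := mul_le_mul_of_nonneg_right e2 (Nat.cast_nonneg q)
      have e5 : σ^2*(k*Real.log n) ≤ σ^2*(c*(q:ℝ)) := by nlinarith only [e3, e4]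
      exact (mul_le_mul_iff_right₀ (by positivity : (0:ℝ) < σ^2)).1 e5
    linarith only [h4]
  -- finish
  rw [hdenom, div_le_iff₀ hdenom0]
  calc (numer.card : ℝ) ≤ θ^q * ((n.choose r).choose m : ℝ) := hB
    _ ≤ (n:ℝ)^(-k) * ((n.choose r).choose m : ℝ) :=
        mul_le_mul_of_nonneg_right hC hdenom0.le

end LemmaCAux

open scoped Classical in
/-- **Lemma 7.3 (Lemma C).** For any `r`-subset `Z` of `[n]` and `x ∈ Z`:
with probability at least `1 − n^{−k}`, if `H = H^r_{n,m}` satisfies `R(δ(n),K)`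
and `H − Z` (on `[n]∖Z`) satisfies `F(δ(n))`, then all but at most `σn` vertices
`y ∈ [n]∖Z` satisfy `Φ(H−((Z∖{x})∪{y})) ≥ (1−σ)·Φ(H−Z)·d_H(x)/D_H`. -/
theorem lemma_C (r : ℕ) (hr : 3 ≤ r) (ε : ℝ) (hε : 0 < ε) (K : ℝ) (hK : 1 ≤ K)
    (δ : ℕ → ℝ) (hδpos : ∀ n, 0 < δ n)
    (hδ : Filter.Tendsto δ Filter.atTop (nhds 0)) :
    ∀ σ : ℝ, 0 < σ → ∀ k : ℝ, 0 < k → ∃ n₀ : ℕ, ∀ n : ℕ, n₀ ≤ n → r ∣ n →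
      ∀ m : ℕ, (1 + ε) * ((n : ℝ) / r) * Real.log n < m → m ≤ n.choose r →
      ∀ Z ∈ Finset.powersetCard r (Finset.range n), ∀ x ∈ Z,
      (((Finset.powersetCard m (Kn n r)).filter
          (fun H => propR r (Finset.range n) H (δ n) K ∧
            propF r (Finset.range n \ Z) (minus H Z) (δ n) ∧
            σ * n <
              (((Finset.range n \ Z).filter (fun y =>
                  ¬((1 - σ) * (phiSub (Finset.range n) H Z : ℝ) * (deg H x : ℝ) /
                      avgDeg r (Finset.range n) H ≤
                    (phiSub (Finset.range n) H (insert y (Z.erase x)) : ℝ)))).card : ℝ))).card : ℝ) /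
        ((Finset.powersetCard m (Kn n r)).card : ℝ) ≤ (n : ℝ) ^ (-k) := by
  intro σ hσ0 k hk
  rcases le_or_gt σ (1/2) with hσ | hσ
  · exact LemmaCAux.lemma_C_aux r hr ε hε K hK δ hδpos hδ σ hσ0 hσ k hk
  · obtain ⟨n₀, hn₀⟩ := LemmaCAux.lemma_C_aux r hr ε hε K hK δ hδpos hδ (1/2)
      (by norm_num) (le_refl _) k hk
    refine ⟨n₀, ?_⟩
    intro n hn hdvd m hm1 hm2 Z hZ x hx
    have hhalf := hn₀ n hn hdvd m hm1 hm2 Z hZ x hx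
    refine le_trans (le_trans ?_ (le_of_eq rfl)) hhalf
    apply LemmaCAux.div_le_div_same_den _ _ _ _ (Nat.cast_nonneg _)
    have hsub : ((Finset.powersetCard m (Kn n r)).filter
          (fun H => propR r (Finset.range n) H (δ n) K ∧
            propF r (Finset.range n \ Z) (minus H Z) (δ n) ∧
            σ * n <
              (((Finset.range n \ Z).filter (fun y =>
                  ¬((1 - σ) * (phiSub (Finset.range n) H Z : ℝ) * (deg H x : ℝ) /
                      avgDeg r (Finset.range n) H ≤
                    (phiSub (Finset.range n) H (insert y (Z.erase x)) : ℝ)))).card : ℝ)))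
        ⊆ ((Finset.powersetCard m (Kn n r)).filter
          (fun H => propR r (Finset.range n) H (δ n) K ∧
            propF r (Finset.range n \ Z) (minus H Z) (δ n) ∧
            (1/2) * n <
              (((Finset.range n \ Z).filter (fun y =>
                  ¬((1 - 1/2) * (phiSub (Finset.range n) H Z : ℝ) * (deg H x : ℝ) /
                      avgDeg r (Finset.range n) H ≤
                    (phiSub (Finset.range n) H (insert y (Z.erase x)) : ℝ)))).card : ℝ))) := by
      intro H hH
      rw [Finset.mem_filter] at hH ⊢
      obtain ⟨hHm, hR, hF, hbad⟩ := hH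
      refine ⟨hHm, hR, hF, ?_⟩
      have hbadsub : ((Finset.range n \ Z).filter (fun y =>
            ¬((1 - σ) * (phiSub (Finset.range n) H Z : ℝ) * (deg H x : ℝ) /
                avgDeg r (Finset.range n) H ≤
              (phiSub (Finset.range n) H (insert y (Z.erase x)) : ℝ))))
          ⊆ ((Finset.range n \ Z).filter (fun y =>
            ¬((1 - 1/2) * (phiSub (Finset.range n) H Z : ℝ) * (deg H x : ℝ) /
                avgDeg r (Finset.range n) H ≤
              (phiSub (Finset.range n) H (insert y (Z.erase x)) : ℝ)))) := by
        intro y hy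
        rw [Finset.mem_filter] at hy ⊢
        refine ⟨hy.1, ?_⟩
        intro hcon
        apply hy.2
        refine le_trans ?_ hcon
        apply LemmaCAux.div_le_div_same_den
        · have hX : (0:ℝ) ≤ (phiSub (Finset.range n) H Z : ℝ) * (deg H x : ℝ) := by positivity
          nlinarith only [hX, hσ,
            mul_le_mul_of_nonneg_right (show (1:ℝ) - σ ≤ 1 - 1/2 by linarith only [hσ]) hX]
        · rw [avgDeg]
          positivity
      have hcardle : (((Finset.range n \ Z).filter (fun y =>
            ¬((1 - σ) * (phiSub (Finset.range n) H Z : ℝ) * (deg H x : ℝ) /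
                avgDeg r (Finset.range n) H ≤
              (phiSub (Finset.range n) H (insert y (Z.erase x)) : ℝ)))).card : ℝ)
          ≤ (((Finset.range n \ Z).filter (fun y =>
            ¬((1 - 1/2) * (phiSub (Finset.range n) H Z : ℝ) * (deg H x : ℝ) /
                avgDeg r (Finset.range n) H ≤
              (phiSub (Finset.range n) H (insert y (Z.erase x)) : ℝ)))).card : ℝ) := by
        exact_mod_cast Finset.card_le_card hbadsub
      have hn0 : (0:ℝ) ≤ (n:ℝ) := Nat.cast_nonneg n
      have h12 : (1/2:ℝ) * n ≤ σ * n :=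
        mul_le_mul_of_nonneg_right (le_of_lt hσ) hn0
      linarith only [hbad, hcardle, h12]
    exact_mod_cast Finset.card_le_card hsub
end

section
/- Fix an integer r ≥ 3 and a real K ≥ 1. There exist C > 0, σ₀ > 0 and n₀ such that for every n ≥ n₀ divisible by r and every nonempty r-graph H on [n] having at least one perfect matching: if H satisfies R(σ₀,K), F(σ₀) and C(σ₀,σ₀), then H satisfies B(C). -/
open Finset

set_option maxHeartbeats 2000000 in
/-- **Lemma 7.4 (Lemma RCEFB).** There are `C`, `σ₀` and `n₀` such that for
`n ≥ n₀` divisible by `r`, any nonempty `r`-graph `H` on `[n]` with a perfect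
matching that satisfies `R(σ₀,K)`, `F(σ₀)` and `C(σ₀,σ₀)` also satisfies `B(C)`. -/
theorem lemma_RCFB (r : ℕ) (hr : 3 ≤ r) (K : ℝ) (hK : 1 ≤ K) :
    ∃ C : ℝ, 0 < C ∧ ∃ σ₀ : ℝ, 0 < σ₀ ∧ ∃ n₀ : ℕ, ∀ n : ℕ, n₀ ≤ n → r ∣ n →
      ∀ H : Finset (Finset ℕ), H ⊆ Kn n r → H.Nonempty →
        0 < pmCount (Finset.range n) H →
        propR r (Finset.range n) H σ₀ K →
        propF r (Finset.range n) H σ₀ →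
        propC r (Finset.range n) H σ₀ σ₀ →
        propB r (Finset.range n) H C := by
  classical
  have hKpos : (0:ℝ) < K := lt_of_lt_of_le one_pos hK
  have hrR : (3:ℝ) ≤ (r:ℝ) := by exact_mod_cast hr
  set σ : ℝ := 1 / (2 * (2 * (r:ℝ)) ^ r) with hσdef
  have h2rpos : (0:ℝ) < (2 * (r:ℝ)) ^ r := by positivity
  have hσpos : 0 < σ := by positivity
  have h2r2 : (2:ℝ) ≤ (2 * (r:ℝ)) ^ r := by
    have h1 : (2:ℝ) ≤ 2 * (r:ℝ) := by linarith
    calc (2:ℝ) ≤ 2 * (r:ℝ) := h1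
      _ ≤ (2 * (r:ℝ)) ^ r := le_self_pow₀ (by linarith) (by omega)
  have hσle : σ ≤ 1/4 := by
    rw [hσdef, div_le_div_iff₀ (by positivity) (by norm_num)]
    nlinarith
  set C : ℝ := 2 * (2*K) ^ r with hCdef
  have hCpos : 0 < C := by positivity
  obtain ⟨N, hN⟩ := exists_nat_ge ((Nat.factorial (2*r) : ℝ) / σ ^ (2*r))
  refine ⟨C, hCpos, σ, hσpos, max (4*r) N, ?_⟩
  intro n hn hdvd H hHsub hHne hΦpos hR hF hC
  have hn4r : 4*r ≤ n := le_trans (le_max_left _ _) hn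
  have hnN : N ≤ n := le_trans (le_max_right _ _) hn
  have hn0 : 0 < n := by omega
  have hrn : r ≤ n := by omega
  have hn1R : (1:ℝ) ≤ (n:ℝ) := by exact_mod_cast hn0
  set W := Finset.range n with hWdef
  have hW : W.card = n := Finset.card_range n
  set Φ : ℝ := (pmCount W H : ℝ) with hΦdef
  set D : ℝ := avgDeg r W H with hDdef
  have hΦ1 : (1:ℝ) ≤ Φ := Nat.one_le_cast.mpr hΦpos
  have hHcard1 : 1 ≤ H.card := hHne.card_pos
  have hD0 : 0 < D := by
    rw [hDdef, avgDeg, hW]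
    apply div_pos
    · apply mul_pos
      · exact_mod_cast (by omega : 0 < r)
      · exact_mod_cast hHcard1
    · exact_mod_cast hn0
  have hDleNr : D ≤ (n:ℝ) ^ r := by
    rw [hDdef, avgDeg, hW, div_le_iff₀ (by exact_mod_cast hn0)]
    have h1 : (H.card:ℝ) ≤ (n:ℝ) ^ r := by
      have h2 : H.card ≤ n ^ r := by
        calc H.card ≤ (Kn n r).card := Finset.card_le_card hHsub
          _ = n.choose r := by rw [Kn, Finset.card_powersetCard, Finset.card_range]
          _ ≤ n ^ r := Nat.choose_le_pow n r
      exact_mod_cast h2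
    have h2 : (r:ℝ) ≤ (n:ℝ) := by exact_mod_cast hrn
    calc (r:ℝ) * (H.card:ℝ) ≤ (n:ℝ) * ((n:ℝ)^r) :=
          mul_le_mul h2 h1 (by positivity) (by positivity)
      _ = (n:ℝ)^r * (n:ℝ) := by ring
  have hexp : (n:ℝ) ^ r ≤ Real.exp (σ * n) := by
    have h1 : (σ*(n:ℝ)) ^ (2*r) / (Nat.factorial (2*r) : ℝ) ≤ Real.exp (σ*n) :=
      Real.pow_div_factorial_le_exp (x := σ*(n:ℝ)) (by positivity) (2*r)
    refine le_trans ?_ h1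
    rw [le_div_iff₀ (by positivity)]
    have hfact : ((2*r).factorial : ℝ) ≤ σ ^ (2*r) * n := by
      rw [div_le_iff₀ (by positivity)] at hN
      calc ((2*r).factorial : ℝ) ≤ (N:ℝ) * σ ^ (2*r) := hN
        _ ≤ (n:ℝ) * σ ^ (2*r) := by
            have : (N:ℝ) ≤ (n:ℝ) := by exact_mod_cast hnN
            nlinarith [pow_pos hσpos (2*r)]
        _ = σ ^ (2*r) * n := by ring
    have hnpow : (n:ℝ)^r * (n:ℝ) ≤ (n:ℝ)^(2*r) := by
      calc (n:ℝ)^r * (n:ℝ) = (n:ℝ)^(r+1) := by rw [pow_succ]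
        _ ≤ (n:ℝ)^(2*r) := pow_le_pow_right₀ hn1R (by omega)
    calc (n:ℝ)^r * ((2*r).factorial : ℝ) ≤ (n:ℝ)^r * (σ^(2*r) * n) := by
          apply mul_le_mul_of_nonneg_left hfact (by positivity)
      _ = σ^(2*r) * ((n:ℝ)^r * (n:ℝ)) := by ring
      _ ≤ σ^(2*r) * (n:ℝ)^(2*r) := by
          apply mul_le_mul_of_nonneg_left hnpow (by positivity)
      _ = (σ*(n:ℝ))^(2*r) := by rw [mul_pow]
  set β : ℝ := (1 - σ)/K with hβdef
  have hβpos : 0 < β := div_pos (by linarith) hKpos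
  have hβle1 : β ≤ 1 := by
    rw [hβdef, div_le_one hKpos]; linarith
  have hβinv : 1/(2*K) ≤ β := by
    rw [hβdef, div_le_div_iff₀ (by positivity) hKpos]
    nlinarith
  have hβC : 2 ≤ β ^ r * C := by
    have h1 : (1/(2*K)) ^ r ≤ β ^ r := pow_le_pow_left₀ (by positivity) hβinv r
    have h2 : (1/(2*K)) ^ r * C = 2 := by
      rw [hCdef, div_pow, one_pow]
      field_simp
    calc (2:ℝ) = (1/(2*K))^r * C := h2.symm
      _ ≤ β ^ r * C := mul_le_mul_of_nonneg_right h1 (le_of_lt hCpos)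
  -- list of vertices of A etc, main argument
  unfold propB
  intro A hA
  by_contra hcon
  push_neg at hcon
  have hApc : A ∈ Finset.powersetCard r W := hHsub hA
  obtain ⟨hAW, hAcard⟩ := Finset.mem_powersetCard.mp hApc
  set ΦA : ℝ := (phiSub W H A : ℝ) with hΦAdef
  have hCΦD : 0 < C * Φ / D := by positivity
  have hΦApos : 0 < ΦA := lt_trans hCΦD hcon
  have hDexp : D ≤ Real.exp (σ * n) := le_trans hDleNr hexp
  have hexpD : Real.exp (-σ * (n:ℝ)) ≤ 1/D := by
    rw [neg_mul, Real.exp_neg, one_div]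
    exact inv_anti₀ hD0 hDexp
  have hΦDnn : (0:ℝ) ≤ Φ / D := by positivity
  have hlow : ∀ i : ℕ, i ≤ r → Φ * Real.exp (-σ * (n:ℝ)) ≤ β ^ i * ΦA := by
    intro i hi
    calc Φ * Real.exp (-σ * (n:ℝ)) ≤ Φ * (1/D) :=
          mul_le_mul_of_nonneg_left hexpD (by positivity)
      _ = Φ / D := by ring
      _ ≤ β^r * C * (Φ/D) := by linarith [mul_le_mul_of_nonneg_right hβC hΦDnn]
      _ = β^r * (C * Φ / D) := by ring
      _ ≤ β^r * ΦA := mul_le_mul_of_nonneg_left hcon.le (by positivity)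
      _ ≤ β^i * ΦA :=
          mul_le_mul_of_nonneg_right (pow_le_pow_of_le_one hβpos.le hβle1 hi) hΦApos.le
  -- enumeration of A
  set l : List ℕ := A.sort (· ≤ ·) with hldef
  have hlen : l.length = r := by rw [hldef, Finset.length_sort, hAcard]
  set xi : ℕ → ℕ := fun j => l.getD j 0 with hxidef
  have hxiA : ∀ j, j < r → xi j ∈ A := by
    intro j hj
    have hj' : j < l.length := by omega
    have : xi j = l[j] := List.getD_eq_getElem l 0 hj'
    rw [this]
    exact (Finset.mem_sort _).mp (List.getElem_mem hj')
  have hxiW : ∀ j, j < r → xi j ∈ W := fun j hj => hAW (hxiA j hj)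
  have hxiinj : ∀ j k, j < r → k < r → xi j = xi k → j = k := by
    intro j k hj hk hjk
    have hj' : j < l.length := by omega
    have hk' : k < l.length := by omega
    have h1 : xi j = l[j] := List.getD_eq_getElem l 0 hj'
    have h2 : xi k = l[k] := List.getD_eq_getElem l 0 hk'
    rw [h1, h2] at hjk
    exact ((Finset.sort_nodup _ _).getElem_inj_iff).mp hjk
  set g : ℝ := (n:ℝ) - r - σ * n with hgdef
  have hσn4 : σ * n ≤ (n:ℝ)/4 := by
    have h := mul_le_mul_of_nonneg_right hσle (Nat.cast_nonneg (α := ℝ) n)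
    linarith
  have hr4 : (r:ℝ) ≤ (n:ℝ)/4 := by
    have : (4*r : ℝ) ≤ (n:ℝ) := by exact_mod_cast hn4r
    linarith
  have hg2 : (n:ℝ)/2 ≤ g := by rw [hgdef]; linarith
  have hgpos : 0 < g := by linarith
  have hrpos : (0:ℝ) < (r:ℝ) := by linarith
  -- the key induction
  have key : ∀ i : ℕ, i ≤ r → ∃ S : Finset (Finset ℕ),
      (∀ Z ∈ S, Z ∈ Finset.powersetCard r W ∧
        (∀ j, i ≤ j → j < r → xi j ∈ Z) ∧
        β ^ i * ΦA ≤ (phiSub W H Z : ℝ)) ∧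
      (g / r) ^ i ≤ (S.card : ℝ) := by
    intro i
    induction i with
    | zero =>
      intro _
      refine ⟨{A}, ?_, by simp⟩
      intro Z hZ
      rw [Finset.mem_singleton] at hZ
      subst hZ
      exact ⟨hApc, fun j _ hj => hxiA j hj, by rw [pow_zero, one_mul]⟩
    | succ i ih =>
      intro hi1
      obtain ⟨S, hSmem, hScard⟩ := ih (by omega)
      have hir : i < r := by omega
      set x := xi i with hxdef
      have hxW : x ∈ W := hxiW i hir
      set good : Finset ℕ → Finset ℕ := fun Z => (W \ Z).filter (fun y =>
        (1 - σ) * (phiSub W H Z : ℝ) * (deg H x : ℝ) / D ≤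
          (phiSub W H (insert y (Z.erase x)) : ℝ)) with hgooddef
      -- basic facts for Z ∈ S
      have hxZ : ∀ Z ∈ S, x ∈ Z := fun Z hZ => (hSmem Z hZ).2.1 i le_rfl hir
      have hgoodcard : ∀ Z ∈ S, g ≤ ((good Z).card : ℝ) := by
        intro Z hZ
        obtain ⟨hZpc, hZinv, hZphi⟩ := hSmem Z hZ
        obtain ⟨hZW, hZcard⟩ := Finset.mem_powersetCard.mp hZpc
        have hthresh : Φ * Real.exp (-σ * (W.card:ℝ)) ≤ (phiSub W H Z : ℝ) := by
          rw [hW]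
          exact le_trans (hlow i hir.le) hZphi
        have hbad := hC Z hZpc hthresh x (hxZ Z hZ)
        rw [hW] at hbad
        have hsplit := Finset.card_filter_add_card_filter_not
          (s := W \ Z) (p := fun y =>
            (1 - σ) * (phiSub W H Z : ℝ) * (deg H x : ℝ) / D ≤
              (phiSub W H (insert y (Z.erase x)) : ℝ))
        have hsd : (W \ Z).card = n - r := by
          rw [Finset.card_sdiff_of_subset hZW, hW, hZcard]
        have hsdR : (((W \ Z).card : ℕ) : ℝ) = (n:ℝ) - r := by
          rw [hsd]; push_cast [Nat.cast_sub hrn]; ring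
        have hcast : ((good Z).card : ℝ) + (((W \ Z).filter (fun y =>
            ¬((1 - σ) * (phiSub W H Z : ℝ) * (deg H x : ℝ) / D ≤
              (phiSub W H (insert y (Z.erase x)) : ℝ)))).card : ℝ) = (n:ℝ) - r := by
          rw [← hsdR]
          exact_mod_cast congrArg (Nat.cast (R := ℝ)) hsplit
        rw [hgdef]
        linarith [hcast, hbad]
      -- properties of the new sets
      have hnew : ∀ Z ∈ S, ∀ y ∈ good Z,
          insert y (Z.erase x) ∈ Finset.powersetCard r W ∧
          (∀ j, i + 1 ≤ j → j < r → xi j ∈ insert y (Z.erase x)) ∧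
          β ^ (i+1) * ΦA ≤ (phiSub W H (insert y (Z.erase x)) : ℝ) := by
        intro Z hZ y hy
        obtain ⟨hZpc, hZinv, hZphi⟩ := hSmem Z hZ
        obtain ⟨hZW, hZcard⟩ := Finset.mem_powersetCard.mp hZpc
        rw [hgooddef, Finset.mem_filter, Finset.mem_sdiff] at hy
        obtain ⟨⟨hyW, hyZ⟩, hyphi⟩ := hy
        have hynotin : y ∉ Z.erase x := fun h => hyZ (Finset.erase_subset _ _ h)
        have hxZ' : x ∈ Z := hxZ Z hZ
        refine ⟨?_, ?_, ?_⟩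
        · rw [Finset.mem_powersetCard]
          constructor
          · exact Finset.insert_subset hyW (le_trans (Finset.erase_subset _ _) hZW)
          · rw [Finset.card_insert_of_notMem hynotin, Finset.card_erase_of_mem hxZ', hZcard]
            omega
        · intro j hj1 hj2
          have hne : xi j ≠ x := by
            intro h
            have := hxiinj j i hj2 hir h
            omega
          exact Finset.mem_insert_of_mem (Finset.mem_erase.mpr ⟨hne, hZinv j (by omega) hj2⟩)
        · have hdeg : D / K ≤ (deg H x : ℝ) := (hR.2.1 x hxW).2
          have hphiZnn : (0:ℝ) ≤ (phiSub W H Z : ℝ) := Nat.cast_nonneg _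
          have heq : (1 - σ) * (phiSub W H Z : ℝ) * (D / K) / D = β * (phiSub W H Z : ℝ) := by
            rw [hβdef]
            field_simp
          have h2 : (1 - σ) * (phiSub W H Z : ℝ) * (D / K) ≤
              (1 - σ) * (phiSub W H Z : ℝ) * (deg H x : ℝ) :=
            mul_le_mul_of_nonneg_left hdeg (mul_nonneg (by linarith) hphiZnn)
          calc β ^ (i+1) * ΦA = β * (β ^ i * ΦA) := by ring
            _ ≤ β * (phiSub W H Z : ℝ) := mul_le_mul_of_nonneg_left hZphi hβpos.le
            _ = (1 - σ) * (phiSub W H Z : ℝ) * (D / K) / D := heq.symm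
            _ ≤ (1 - σ) * (phiSub W H Z : ℝ) * (deg H x : ℝ) / D :=
                (div_le_div_iff_of_pos_right hD0).mpr h2
            _ ≤ (phiSub W H (insert y (Z.erase x)) : ℝ) := hyphi
      -- build the next family
      set T := S.sigma (fun Z => good Z) with hTdef
      set f : (Σ _ : Finset ℕ, ℕ) → Finset ℕ := fun p => insert p.2 (p.1.erase x) with hfdef
      refine ⟨T.image f, ?_, ?_⟩
      · intro Z hZim
        rw [Finset.mem_image] at hZim
        obtain ⟨p, hpT, hpf⟩ := hZim
        rw [hTdef, Finset.mem_sigma] at hpT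
        rw [← hpf, hfdef]
        exact hnew p.1 hpT.1 p.2 hpT.2
      · have recov : ∀ p ∈ T, p.1 = insert x ((f p).erase p.2) := by
          intro p hpT
          rw [hTdef, Finset.mem_sigma] at hpT
          have hxp : x ∈ p.1 := hxZ p.1 hpT.1
          have hy := hpT.2
          rw [hgooddef, Finset.mem_filter, Finset.mem_sdiff] at hy
          have hynotin : p.2 ∉ p.1.erase x := fun h => hy.1.2 (Finset.erase_subset _ _ h)
          rw [hfdef]
          simp only
          rw [Finset.erase_insert hynotin, Finset.insert_erase hxp]
        have hfib : ∀ b ∈ T.image f, (T.filter (fun p => f p = b)).card ≤ r := by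
          intro b hb
          rw [Finset.mem_image] at hb
          obtain ⟨p0, hp0T, hp0f⟩ := hb
          have hp0T' := Finset.mem_sigma.mp (hTdef ▸ hp0T)
          have hbcard : b.card = r := by
            have h1 := (hnew p0.1 hp0T'.1 p0.2 hp0T'.2).1
            rw [Finset.mem_powersetCard] at h1
            rw [← hp0f, hfdef]
            exact h1.2
          refine le_trans (Finset.card_le_card_of_injOn (fun p => p.2) ?_ ?_)
            (le_of_eq hbcard)
          · intro p hp
            rw [Finset.mem_coe, Finset.mem_filter] at hp
            rw [← hp.2, hfdef]
            exact Finset.mem_insert_self _ _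
          · intro p hp q hq hpq
            simp only [Finset.coe_filter, Set.mem_setOf_eq] at hp hq
            simp only at hpq
            have e1 : p.1 = q.1 := by
              rw [recov p hp.1, recov q hq.1, hp.2, hq.2, hpq]
            exact Sigma.ext e1 (heq_of_eq hpq)
        have hTcard : T.card ≤ r * (T.image f).card :=
          Finset.card_le_mul_card_image T r hfib
        have hTsum : T.card = ∑ Z ∈ S, (good Z).card := by
          rw [hTdef]
          exact Finset.card_sigma S good
        have hTlow : ((S.card : ℝ)) * g ≤ (T.card : ℝ) := by
          rw [hTsum]
          push_cast
          calc (S.card:ℝ) * g = ∑ _Z ∈ S, g := by rw [Finset.sum_const, nsmul_eq_mul]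
            _ ≤ ∑ Z ∈ S, ((good Z).card : ℝ) := Finset.sum_le_sum (fun Z hZ => hgoodcard Z hZ)
        have h1 : (T.card : ℝ) ≤ (r:ℝ) * ((T.image f).card : ℝ) := by exact_mod_cast hTcard
        have h2 : (g/r)^i * g ≤ (S.card:ℝ) * g := mul_le_mul_of_nonneg_right hScard hgpos.le
        have h3 : (g/(r:ℝ))^(i+1) = ((g/r)^i * g)/r := by rw [pow_succ]; ring
        rw [h3, div_le_iff₀ hrpos]
        calc (g/(r:ℝ))^i * g ≤ (T.card:ℝ) := le_trans h2 hTlow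
          _ ≤ (r:ℝ) * ((T.image f).card:ℝ) := h1
          _ = ((T.image f).card:ℝ) * r := by ring
  -- conclusion: contradiction with propF
  obtain ⟨S, hSmem, hScard⟩ := key r le_rfl
  unfold propF at hF
  rw [hW] at hF
  have hSsub : S ⊆ (Finset.powersetCard r W).filter (fun U =>
      ¬((1 - σ) * Φ / D ≤ (phiSub W H U : ℝ) ∧
        (phiSub W H U : ℝ) ≤ (1 + σ) * Φ / D)) := by
    intro Z hZ
    obtain ⟨hZpc, _, hZphi⟩ := hSmem Z hZ
    rw [Finset.mem_filter]
    refine ⟨hZpc, ?_⟩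
    rintro ⟨-, hup⟩
    have h3 : β^r * (C*Φ/D) < β^r * ΦA := by
      apply mul_lt_mul_of_pos_left hcon (pow_pos hβpos r)
    have h4 : 2*(Φ/D) ≤ β^r*C*(Φ/D) := mul_le_mul_of_nonneg_right hβC hΦDnn
    have hΦD : 0 < Φ/D := by positivity
    have h5 : (1+σ)*Φ/D < 2*(Φ/D) := by
      have e : (1+σ)*Φ/D = (1+σ)*(Φ/D) := by ring
      rw [e]
      have hσ1 : σ < 1 := by linarith
      nlinarith
    have h6 : β^r*C*(Φ/D) = β^r*(C*Φ/D) := by ring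
    linarith
  have hcard1 : (g/(r:ℝ))^r ≤ (((Finset.powersetCard r W).filter (fun U =>
      ¬((1 - σ) * Φ / D ≤ (phiSub W H U : ℝ) ∧
        (phiSub W H U : ℝ) ≤ (1 + σ) * Φ / D))).card : ℝ) :=
    le_trans hScard (by exact_mod_cast Finset.card_le_card hSsub)
  have hchoose : ((n.choose r : ℕ):ℝ) ≤ (n:ℝ)^r := by exact_mod_cast Nat.choose_le_pow n r
  have hkey2 : σ * ((n:ℝ))^r < (g/(r:ℝ))^r := by
    have h1 : (n:ℝ)/(2*r) ≤ g/r := by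
      rw [div_le_div_iff₀ (by positivity) hrpos]
      nlinarith
    have h2 : ((n:ℝ)/(2*r))^r ≤ (g/r)^r := pow_le_pow_left₀ (by positivity) h1 r
    have h3 : ((n:ℝ)/(2*r))^r = (n:ℝ)^r * (2*σ) := by
      rw [hσdef, div_pow, mul_pow]
      field_simp
    have hnrpos : (0:ℝ) < (n:ℝ)^r := by positivity
    have h4 : σ*(n:ℝ)^r < 2*σ*(n:ℝ)^r := by nlinarith
    calc σ*(n:ℝ)^r < 2*σ*(n:ℝ)^r := h4
      _ = (n:ℝ)^r*(2*σ) := by ring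
      _ = ((n:ℝ)/(2*r))^r := h3.symm
      _ ≤ (g/r)^r := h2
  have hfin : σ * ((n.choose r:ℕ):ℝ) ≤ σ*(n:ℝ)^r :=
    mul_le_mul_of_nonneg_left hchoose hσpos.le
  linarith
end
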